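/- arXiv:1011.0284 — 4 statements merged into one kernel-verified Lean document; each statement's English description precedes it below -/
import Mathlib

section
/- For all integers r ≥ 1 and s with r ≤ s ≤ 2r, the matching polynomial of the graph S(r,s) is μ(S(r,s),x) = x (x² − s − 1)(x² − 1)^{r−1}. -/
open Polynomial

/-- The graph obtained from `G` by deleting the vertex `u` and all incident edges. -/
def SimpleGraph.deleteVertex {V : Type*} (G : SimpleGraph V) (u : V) :
    SimpleGraph {v : V // v ≠ u} where
  Adj a b := G.Adj a b
  symm := ⟨fun _ _ h => G.adj_symm h⟩
  loopless := ⟨fun a h => G.loopless.irrefl a h⟩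

/-- `s` is a matching in `G`: a set of edges of `G` that are pairwise non-incident. -/
def SimpleGraph.IsMatchingFinset {V : Type*} (G : SimpleGraph V) (s : Finset (Sym2 V)) : Prop :=
  ↑s ⊆ G.edgeSet ∧ (s : Set (Sym2 V)).Pairwise fun e f => ∀ v ∈ e, v ∉ f

/-- `m(G,k)`: the number of `k`-matchings in `G`. -/
noncomputable def SimpleGraph.numMatchings {V : Type*} (G : SimpleGraph V) (k : ℕ) : ℕ :=
  {s : Finset (Sym2 V) | s.card = k ∧ G.IsMatchingFinset s}.ncard

/-- The matching polynomial `μ(G,x) = ∑_k (-1)^k m(G,k) x^(n-2k)`. -/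
noncomputable def SimpleGraph.matchingPolynomial {V : Type*} [Fintype V] (G : SimpleGraph V) :
    Polynomial ℝ :=
  ∑ k ∈ Finset.range (Fintype.card V + 1),
    C ((-1 : ℝ) ^ k * (G.numMatchings k : ℝ)) * X ^ (Fintype.card V - 2 * k)

/-- The graph `S(r,s)` (for `r ≤ s ≤ 2r`): `r` disjoint copies of `K₂` together with an extra
vertex `none` joined by `s` edges to them, namely to the endpoint `(i, false)` of every copy and
to both endpoints of the first `s - r` copies. -/
def SGraph (r s : ℕ) : SimpleGraph (Option (Fin r × Bool)) :=
  SimpleGraph.fromRel fun x y =>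
    (∃ i, x = some (i, false) ∧ y = some (i, true)) ∨
    (∃ i, x = none ∧ y = some (i, false)) ∨
    (∃ i : Fin r, (i : ℕ) < s - r ∧ x = none ∧ y = some (i, true))

def inEdge {r : ℕ} (i : Fin r) : Sym2 (Option (Fin r × Bool)) :=
  s(some (i, false), some (i, true))

def cEdge {r : ℕ} (p : Fin r × Bool) : Sym2 (Option (Fin r × Bool)) :=
  s(none, some p)

lemma mem_edgeSet_SGraph {r s : ℕ} (e : Sym2 (Option (Fin r × Bool))) :
    e ∈ (SGraph r s).edgeSet ↔
      (∃ i, e = inEdge i) ∨ (∃ p : Fin r × Bool, (p.2 = false ∨ (p.1 : ℕ) < s - r) ∧ e = cEdge p) := by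
  induction e using Sym2.ind with
  | _ x y =>
    rw [SimpleGraph.mem_edgeSet]
    unfold SGraph
    rw [SimpleGraph.fromRel_adj]
    unfold inEdge cEdge
    constructor
    · rintro ⟨hne, (⟨i, rfl, rfl⟩|⟨i, rfl, rfl⟩|⟨i, hi, rfl, rfl⟩)|(⟨i, rfl, rfl⟩|⟨i, rfl, rfl⟩|⟨i, hi, rfl, rfl⟩)⟩
      · exact Or.inl ⟨i, rfl⟩
      · exact Or.inr ⟨(i, false), Or.inl rfl, rfl⟩
      · exact Or.inr ⟨(i, true), Or.inr hi, rfl⟩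
      · exact Or.inl ⟨i, Sym2.eq_swap⟩
      · exact Or.inr ⟨(i, false), Or.inl rfl, Sym2.eq_swap⟩
      · exact Or.inr ⟨(i, true), Or.inr hi, Sym2.eq_swap⟩
    · rintro (⟨i, h⟩|⟨p, hp, h⟩)
      · rw [Sym2.eq_iff] at h
        rcases h with ⟨rfl, rfl⟩|⟨rfl, rfl⟩
        · exact ⟨by simp, Or.inl (Or.inl ⟨i, rfl, rfl⟩)⟩
        · exact ⟨by simp, Or.inr (Or.inl ⟨i, rfl, rfl⟩)⟩
      · rw [Sym2.eq_iff] at h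
        obtain ⟨i, b⟩ := p
        rcases hp with hp|hp
        · simp only at hp; subst hp
          rcases h with ⟨rfl, rfl⟩|⟨rfl, rfl⟩
          · exact ⟨by simp, Or.inl (Or.inr (Or.inl ⟨i, rfl, rfl⟩))⟩
          · exact ⟨by simp, Or.inr (Or.inr (Or.inl ⟨i, rfl, rfl⟩))⟩
        · cases b
          · rcases h with ⟨rfl, rfl⟩|⟨rfl, rfl⟩
            · exact ⟨by simp, Or.inl (Or.inr (Or.inl ⟨i, rfl, rfl⟩))⟩
            · exact ⟨by simp, Or.inr (Or.inr (Or.inl ⟨i, rfl, rfl⟩))⟩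
          · rcases h with ⟨rfl, rfl⟩|⟨rfl, rfl⟩
            · exact ⟨by simp, Or.inl (Or.inr (Or.inr ⟨i, hp, rfl, rfl⟩))⟩
            · exact ⟨by simp, Or.inr (Or.inr (Or.inr ⟨i, hp, rfl, rfl⟩))⟩

lemma inEdge_injective {r : ℕ} : Function.Injective (inEdge (r := r)) := by
  intro i j h
  unfold inEdge at h
  rw [Sym2.eq_iff] at h
  rcases h with ⟨h, _⟩|⟨h, _⟩ <;> simpa using h

lemma cEdge_injective {r : ℕ} : Function.Injective (cEdge (r := r)) := by
  intro p q h
  unfold cEdge at h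
  rw [Sym2.eq_iff] at h
  rcases h with ⟨_, h⟩|⟨h, _⟩ <;> simp_all

lemma none_not_mem_inEdge {r : ℕ} (i : Fin r) : none ∉ inEdge i := by
  unfold inEdge; simp

lemma none_mem_cEdge {r : ℕ} (p : Fin r × Bool) : none ∈ cEdge p := by
  unfold cEdge; simp

lemma cEdge_ne_inEdge {r : ℕ} (p : Fin r × Bool) (i : Fin r) : cEdge p ≠ inEdge i := by
  intro h
  exact none_not_mem_inEdge i (h ▸ none_mem_cEdge p)

lemma mem_inEdge {r : ℕ} {v : Option (Fin r × Bool)} {i : Fin r} :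
    v ∈ inEdge i ↔ v = some (i, false) ∨ v = some (i, true) := by
  unfold inEdge; rw [Sym2.mem_iff]

lemma mem_cEdge {r : ℕ} {v : Option (Fin r × Bool)} {p : Fin r × Bool} :
    v ∈ cEdge p ↔ v = none ∨ v = some p := by
  unfold cEdge; rw [Sym2.mem_iff]

lemma inEdge_shared {r : ℕ} {i j : Fin r} {v : Option (Fin r × Bool)}
    (hi : v ∈ inEdge i) (hj : v ∈ inEdge j) : i = j := by
  rw [mem_inEdge] at hi hj
  rcases hi with rfl|rfl <;> rcases hj with h|h <;> simpa using congrArg (fun o => o.map Prod.fst) h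

lemma some_fst_mem_inEdge {r : ℕ} (p : Fin r × Bool) : some p ∈ inEdge p.1 := by
  rw [mem_inEdge]; rcases p with ⟨i, _|_⟩ <;> simp

/-- Structure of matchings in `SGraph r s`. -/
lemma matching_structure {r s : ℕ} {m : Finset (Sym2 (Option (Fin r × Bool)))}
    (hm : (SGraph r s).IsMatchingFinset m) :
    (∃ B : Finset (Fin r), m = B.image inEdge) ∨
    (∃ p : Fin r × Bool, (p.2 = false ∨ (p.1 : ℕ) < s - r) ∧
      ∃ B : Finset (Fin r), p.1 ∉ B ∧ m = insert (cEdge p) (B.image inEdge)) := by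
  obtain ⟨hsub, hpw⟩ := hm
  -- every edge of m is either an inEdge or a cEdge
  have hedge : ∀ e ∈ m, (∃ i, e = inEdge i) ∨
      (∃ p : Fin r × Bool, (p.2 = false ∨ (p.1 : ℕ) < s - r) ∧ e = cEdge p) := by
    intro e he
    exact (mem_edgeSet_SGraph e).mp (hsub he)
  set B : Finset (Fin r) := Finset.univ.filter (fun i => inEdge i ∈ m) with hB
  by_cases hc : ∃ p : Fin r × Bool, (p.2 = false ∨ (p.1 : ℕ) < s - r) ∧ cEdge p ∈ m
  · obtain ⟨p, hp, hpm⟩ := hc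
    refine Or.inr ⟨p, hp, B, ?_, ?_⟩
    · intro hmem
      rw [hB, Finset.mem_filter] at hmem
      exact hpw hpm hmem.2 (cEdge_ne_inEdge p p.1) (some p) (mem_cEdge.mpr (Or.inr rfl))
        (some_fst_mem_inEdge p)
    · ext e
      simp only [Finset.mem_insert, Finset.mem_image, hB, Finset.mem_filter, Finset.mem_univ,
        true_and]
      constructor
      · intro he
        rcases hedge e he with ⟨i, rfl⟩|⟨q, hq, rfl⟩
        · exact Or.inr ⟨i, he, rfl⟩
        · left
          by_contra hne
          exact hpw hpm he (fun h => hne h.symm) none (none_mem_cEdge p) (none_mem_cEdge q)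
      · rintro (rfl|⟨i, hi, rfl⟩)
        · exact hpm
        · exact hi
  · refine Or.inl ⟨B, ?_⟩
    ext e
    simp only [Finset.mem_image, hB, Finset.mem_filter, Finset.mem_univ, true_and]
    constructor
    · intro he
      rcases hedge e he with ⟨i, rfl⟩|⟨q, hq, rfl⟩
      · exact ⟨i, he, rfl⟩
      · exact absurd ⟨q, hq, he⟩ hc
    · rintro ⟨i, hi, rfl⟩
      exact hi

/-- Conversely: images of inEdge are matchings. -/
lemma isMatching_image {r s : ℕ} (B : Finset (Fin r)) :
    (SGraph r s).IsMatchingFinset (B.image inEdge) := by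
  constructor
  · intro e he
    simp only [Finset.coe_image, Set.mem_image, Finset.mem_coe] at he
    obtain ⟨i, _, rfl⟩ := he
    exact (mem_edgeSet_SGraph _).mpr (Or.inl ⟨i, rfl⟩)
  · intro e he f hf hne v hv hvf
    simp only [Finset.coe_image, Set.mem_image, Finset.mem_coe] at he hf
    obtain ⟨i, _, rfl⟩ := he
    obtain ⟨j, _, rfl⟩ := hf
    exact hne (congrArg inEdge (inEdge_shared hv hvf))

lemma isMatching_insert {r s : ℕ} (p : Fin r × Bool) (hp : p.2 = false ∨ (p.1 : ℕ) < s - r)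
    (B : Finset (Fin r)) (hpB : p.1 ∉ B) :
    (SGraph r s).IsMatchingFinset (insert (cEdge p) (B.image inEdge)) := by
  have hbase := isMatching_image (r := r) (s := s) B
  constructor
  · intro e he
    simp only [Finset.coe_insert, Set.mem_insert_iff] at he
    rcases he with rfl|he
    · exact (mem_edgeSet_SGraph _).mpr (Or.inr ⟨p, hp, rfl⟩)
    · exact hbase.1 he
  · intro e he f hf hne v hv hvf
    simp only [Finset.coe_insert, Set.mem_insert_iff, Finset.coe_image, Set.mem_image,
      Finset.mem_coe] at he hf
    have key : ∀ (i : Fin r), i ∈ B → ∀ v, v ∈ cEdge p → v ∉ inEdge i := by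
      intro i hi v hv hvi
      rw [mem_cEdge] at hv
      rcases hv with rfl|rfl
      · exact none_not_mem_inEdge i hvi
      · exact hpB (inEdge_shared hvi (some_fst_mem_inEdge p) ▸ hi)
    rcases he with rfl|⟨i, hi, rfl⟩ <;> rcases hf with rfl|⟨j, hj, rfl⟩
    · exact absurd rfl hne
    · exact key j hj v hv hvf
    · exact key i hi v hvf hv
    · exact hne (congrArg inEdge (inEdge_shared hv hvf))

def F0 (r k : ℕ) : Finset (Finset (Sym2 (Option (Fin r × Bool)))) :=
  (Finset.powersetCard k (Finset.univ : Finset (Fin r))).image (fun B => B.image inEdge)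

def Dset (r s : ℕ) : Finset (Fin r × Bool) :=
  Finset.univ.filter fun p => p.2 = false ∨ (p.1 : ℕ) < s - r

def Fc (r s k : ℕ) : Finset (Finset (Sym2 (Option (Fin r × Bool)))) :=
  (Dset r s).biUnion fun p => (Finset.powersetCard (k - 1) (Finset.univ.erase p.1)).image
    (fun B => insert (cEdge p) (B.image inEdge))

lemma card_image_inEdge {r : ℕ} (B : Finset (Fin r)) : (B.image inEdge).card = B.card :=
  Finset.card_image_of_injective B inEdge_injective

lemma cEdge_not_mem_image {r : ℕ} (p : Fin r × Bool) (B : Finset (Fin r)) :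
    cEdge p ∉ B.image inEdge := by
  simp only [Finset.mem_image, not_exists]
  rintro i ⟨_, h⟩
  exact cEdge_ne_inEdge p i h.symm

lemma card_Dset {r s : ℕ} (hrs : r ≤ s) (hs : s ≤ 2 * r) : (Dset r s).card = s := by
  have h1 : Dset r s = ((Finset.univ : Finset (Fin r)).image fun i => (i, false)) ∪
      ((Finset.univ.filter fun i : Fin r => (i : ℕ) < s - r).image fun i => (i, true)) := by
    ext ⟨i, b⟩
    cases b <;> simp [Dset]
  rw [h1, Finset.card_union_of_disjoint, Finset.card_image_of_injective _ (by intro a b h; simpa using h),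
    Finset.card_image_of_injective _ (by intro a b h; simpa using h)]
  · have h2 : (Finset.univ.filter fun i : Fin r => (i : ℕ) < s - r).card = s - r := by
      have : (Finset.univ.filter fun i : Fin r => (i : ℕ) < s - r) =
          (Finset.range (s - r)).attachFin (fun m hm => lt_of_lt_of_le (Finset.mem_range.mp hm) (by omega)) := by
        ext i
        simp [Finset.mem_attachFin]
      rw [this, Finset.card_attachFin, Finset.card_range]
    rw [h2, Finset.card_univ, Fintype.card_fin]
    omega
  · rw [Finset.disjoint_left]
    rintro ⟨i, b⟩ h1 h2
    simp only [Finset.mem_image] at h1 h2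
    obtain ⟨_, _, h1⟩ := h1
    obtain ⟨_, _, h2⟩ := h2
    rw [Prod.ext_iff] at h1 h2
    simp_all

lemma card_F0 {r : ℕ} (k : ℕ) : (F0 r k).card = r.choose k := by
  rw [F0, Finset.card_image_of_injective _ (Finset.image_injective inEdge_injective),
    Finset.card_powersetCard, Finset.card_univ, Fintype.card_fin]

lemma card_Fc {r s k : ℕ} (hr : 1 ≤ r) (hrs : r ≤ s) (hs : s ≤ 2 * r) :
    (Fc r s k).card = s * (r - 1).choose (k - 1) := by
  rw [Fc, Finset.card_biUnion]
  · have hcard : ∀ p ∈ Dset r s,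
        ((Finset.powersetCard (k - 1) (Finset.univ.erase p.1)).image
          (fun B => insert (cEdge p) (B.image inEdge))).card = (r - 1).choose (k - 1) := by
      intro p _
      rw [Finset.card_image_of_injOn, Finset.card_powersetCard, Finset.card_erase_of_mem
        (Finset.mem_univ _), Finset.card_univ, Fintype.card_fin]
      intro B _ B' _ h
      have h2 : B.image inEdge = B'.image inEdge := by
        have e1 : (insert (cEdge p) (B.image inEdge)).erase (cEdge p) = B.image inEdge :=
          Finset.erase_insert (cEdge_not_mem_image p B)
        have e2 : (insert (cEdge p) (B'.image inEdge)).erase (cEdge p) = B'.image inEdge :=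
          Finset.erase_insert (cEdge_not_mem_image p B')
        rw [← e1, ← e2]; exact congrArg (Finset.erase · (cEdge p)) h
      exact Finset.image_injective inEdge_injective h2
    rw [Finset.sum_congr rfl hcard, Finset.sum_const, card_Dset hrs hs, smul_eq_mul]
  · intro p _ q _ hpq
    rw [Function.onFun, Finset.disjoint_left]
    intro a ha ha'
    simp only [Finset.mem_image] at ha ha'
    obtain ⟨B, _, rfl⟩ := ha
    obtain ⟨B', _, h⟩ := ha'
    have : cEdge q ∈ insert (cEdge p) (B.image inEdge) := by
      rw [← h]; exact Finset.mem_insert_self _ _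
    rcases Finset.mem_insert.mp this with h'|h'
    · exact hpq (cEdge_injective h'.symm)
    · exact cEdge_not_mem_image q B h'

lemma disjoint_F0_Fc {r s k : ℕ} : Disjoint (F0 r k) (Fc r s k) := by
  rw [Finset.disjoint_left]
  intro a ha ha'
  simp only [F0, Fc, Finset.mem_image, Finset.mem_biUnion] at ha ha'
  obtain ⟨B, _, rfl⟩ := ha
  obtain ⟨p, _, B', _, h⟩ := ha'
  have : cEdge p ∈ B.image inEdge := by rw [← h]; exact Finset.mem_insert_self _ _
  exact cEdge_not_mem_image p B this

lemma numMatchings_SGraph_zero {r s : ℕ} : (SGraph r s).numMatchings 0 = 1 := by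
  have : {m : Finset (Sym2 (Option (Fin r × Bool))) | m.card = 0 ∧
      (SGraph r s).IsMatchingFinset m} = {∅} := by
    ext m
    simp only [Set.mem_setOf_eq, Set.mem_singleton_iff, Finset.card_eq_zero]
    constructor
    · rintro ⟨rfl, _⟩; rfl
    · rintro rfl
      refine ⟨rfl, ?_, ?_⟩
      · simp
      · simp [Set.Pairwise]
  rw [SimpleGraph.numMatchings, this, Set.ncard_singleton]

lemma numMatchings_SGraph_pos {r s k : ℕ} (hk : 1 ≤ k) :
    (SGraph r s).numMatchings k = ((F0 r k) ∪ (Fc r s k)).card := by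
  have hset : {m : Finset (Sym2 (Option (Fin r × Bool))) | m.card = k ∧
      (SGraph r s).IsMatchingFinset m} = ↑(F0 r k ∪ Fc r s k) := by
    ext m
    simp only [Set.mem_setOf_eq, Finset.coe_union, Set.mem_union, Finset.mem_coe]
    constructor
    · rintro ⟨hcard, hm⟩
      rcases matching_structure hm with ⟨B, rfl⟩|⟨p, hp, B, hpB, rfl⟩
      · left
        rw [F0, Finset.mem_image]
        refine ⟨B, Finset.mem_powersetCard.mpr ⟨Finset.subset_univ _, ?_⟩, rfl⟩
        rw [← card_image_inEdge, hcard]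
      · right
        rw [Fc, Finset.mem_biUnion]
        refine ⟨p, by simp [Dset, hp], ?_⟩
        rw [Finset.mem_image]
        refine ⟨B, Finset.mem_powersetCard.mpr ⟨?_, ?_⟩, rfl⟩
        · intro i hi
          exact Finset.mem_erase.mpr ⟨fun h => hpB (h ▸ hi), Finset.mem_univ _⟩
        · have := Finset.card_insert_of_notMem (cEdge_not_mem_image p B)
          rw [hcard, card_image_inEdge] at this
          omega
    · rintro (h|h)
      · rw [F0, Finset.mem_image] at h
        obtain ⟨B, hB, rfl⟩ := h
        obtain ⟨-, hBc⟩ := Finset.mem_powersetCard.mp hB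
        exact ⟨by rw [card_image_inEdge, hBc], isMatching_image B⟩
      · rw [Fc, Finset.mem_biUnion] at h
        obtain ⟨p, hp, h⟩ := h
        rw [Finset.mem_image] at h
        obtain ⟨B, hB, rfl⟩ := h
        obtain ⟨hBsub, hBc⟩ := Finset.mem_powersetCard.mp hB
        have hpB : p.1 ∉ B := fun h => (Finset.mem_erase.mp (hBsub h)).1 rfl
        refine ⟨?_, isMatching_insert p ?_ B hpB⟩
        · rw [Finset.card_insert_of_notMem (cEdge_not_mem_image p B), card_image_inEdge, hBc]
          omega
        · simpa [Dset] using hp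
  rw [SimpleGraph.numMatchings, hset, Set.ncard_coe_finset]

lemma numMatchings_SGraph {r s : ℕ} (hr : 1 ≤ r) (hrs : r ≤ s) (hs : s ≤ 2 * r) (k : ℕ) :
    (SGraph r s).numMatchings k =
      r.choose k + if k = 0 then 0 else s * (r - 1).choose (k - 1) := by
  rcases Nat.eq_zero_or_pos k with rfl|hk
  · simp [numMatchings_SGraph_zero]
  · rw [numMatchings_SGraph_pos hk, Finset.card_union_of_disjoint disjoint_F0_Fc,
      card_F0, card_Fc hr hrs hs, if_neg (by omega)]


lemma sum_binom_poly (n N : ℕ) (h : n ≤ N) :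
    ∑ k ∈ Finset.range (N + 1), C ((-1 : ℝ) ^ k * (n.choose k : ℝ)) * X ^ (2 * n + 1 - 2 * k)
      = X * (X ^ 2 - 1) ^ n := by
  rw [← Finset.sum_subset (Finset.range_subset_range.mpr (by omega) :
      Finset.range (n + 1) ⊆ Finset.range (N + 1))
    (fun k _ hk => by
      rw [Finset.mem_range, not_lt] at hk
      rw [Nat.choose_eq_zero_of_lt (by omega)]
      simp)]
  have key : (X ^ 2 - 1 : ℝ[X]) ^ n
      = ∑ k ∈ Finset.range (n + 1), (X ^ 2) ^ k * (-1) ^ (n - k) * (n.choose k : ℝ[X]) := by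
    rw [sub_eq_add_neg]
    exact add_pow _ _ _
  rw [key, Finset.mul_sum, ← Finset.sum_range_reflect]
  apply Finset.sum_congr rfl
  intro k hk
  rw [Finset.mem_range] at hk
  have hk' : k ≤ n := by omega
  have e1 : n + 1 - 1 - k = n - k := by omega
  have e2 : 2 * n + 1 - 2 * (n - k) = 2 * k + 1 := by omega
  rw [e1, e2, Nat.choose_symm hk']
  have : (C ((-1 : ℝ) ^ (n - k) * (n.choose k : ℝ)) : ℝ[X])
      = (-1 : ℝ[X]) ^ (n - k) * (n.choose k : ℝ[X]) := by
    rw [map_mul, map_pow, map_neg, map_one, Polynomial.C_eq_natCast]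
  rw [this, pow_succ, pow_mul]
  ring

lemma poly_sum_eq (r s : ℕ) (hr : 1 ≤ r) (hrs : r ≤ s) (hs : s ≤ 2 * r) :
    ∑ k ∈ Finset.range (2 * r + 1 + 1),
      C ((-1 : ℝ) ^ k * ((r.choose k + if k = 0 then 0 else s * (r - 1).choose (k - 1) : ℕ) : ℝ))
        * X ^ (2 * r + 1 - 2 * k) =
      X * (X ^ 2 - C ((s : ℝ) + 1)) * (X ^ 2 - 1) ^ (r - 1) := by
  obtain ⟨r', rfl⟩ : ∃ r', r = r' + 1 := ⟨r - 1, by omega⟩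
  have split : ∀ k ∈ Finset.range (2 * (r' + 1) + 1 + 1),
      C ((-1 : ℝ) ^ k * (((r' + 1).choose k + if k = 0 then 0
          else s * ((r' + 1) - 1).choose (k - 1) : ℕ) : ℝ)) * X ^ (2 * (r' + 1) + 1 - 2 * k)
      = C ((-1 : ℝ) ^ k * ((r' + 1).choose k : ℝ)) * X ^ (2 * (r' + 1) + 1 - 2 * k)
        + C ((-1 : ℝ) ^ k * ((if k = 0 then 0 else s * r'.choose (k - 1) : ℕ) : ℝ))
          * X ^ (2 * (r' + 1) + 1 - 2 * k) := by
    intro k _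
    rw [Nat.add_sub_cancel]
    push_cast
    rw [mul_add, map_add, add_mul]
  rw [Finset.sum_congr rfl split, Finset.sum_add_distrib,
    sum_binom_poly (r' + 1) (2 * (r' + 1) + 1) (by omega)]
  have hshift : ∑ k ∈ Finset.range (2 * (r' + 1) + 1 + 1),
      C ((-1 : ℝ) ^ k * ((if k = 0 then 0 else s * r'.choose (k - 1) : ℕ) : ℝ))
        * X ^ (2 * (r' + 1) + 1 - 2 * k)
      = -(C (s : ℝ) * (X * (X ^ 2 - 1) ^ r')) := by
    rw [Finset.sum_range_succ']
    have term : ∀ k ∈ Finset.range (2 * (r' + 1) + 1),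
        C ((-1 : ℝ) ^ (k + 1) * ((if k + 1 = 0 then 0 else s * r'.choose k : ℕ) : ℝ))
          * X ^ (2 * (r' + 1) + 1 - 2 * (k + 1))
        = -(C (s : ℝ) * (C ((-1 : ℝ) ^ k * (r'.choose k : ℝ)) * X ^ (2 * r' + 1 - 2 * k))) := by
      intro k _
      rw [if_neg (by omega)]
      have he : 2 * (r' + 1) + 1 - 2 * (k + 1) = 2 * r' + 1 - 2 * k := by omega
      rw [he]
      push_cast
      rw [pow_succ]
      rw [show ((-1 : ℝ) ^ k * -1 * ((s : ℝ) * (r'.choose k : ℝ)))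
        = -((s : ℝ) * ((-1 : ℝ) ^ k * (r'.choose k : ℝ))) by ring]
      rw [map_neg, map_mul]
      ring
    simp only [Nat.add_sub_cancel]
    rw [Finset.sum_congr rfl term]
    simp only [if_true, ite_true, Nat.cast_zero, mul_zero, map_zero, zero_mul, add_zero]
    rw [Finset.sum_neg_distrib, ← Finset.mul_sum,
      sum_binom_poly r' (2 * (r' + 1)) (by omega)]
  rw [hshift]
  have hC : (C ((s : ℝ) + 1) : ℝ[X]) = C (s : ℝ) + 1 := by rw [map_add, map_one]
  rw [hC, Nat.add_sub_cancel, pow_succ]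
  ring

/-- The matching polynomial of `S(r,s)` is `x (x² - s - 1)(x² - 1)^(r-1)`. -/
theorem matchingPolynomial_SGraph (r s : ℕ) (hr : 1 ≤ r) (hrs : r ≤ s) (hs : s ≤ 2 * r) :
    (SGraph r s).matchingPolynomial =
      X * (X ^ 2 - C ((s : ℝ) + 1)) * (X ^ 2 - 1) ^ (r - 1) := by
  have hcard : Fintype.card (Option (Fin r × Bool)) = 2 * r + 1 := by
    simp [mul_comm]
  rw [SimpleGraph.matchingPolynomial]
  simp_rw [hcard, numMatchings_SGraph hr hrs hs]
  exact poly_sum_eq r s hr hrs hs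
end

section
/- For all integers r ≥ 1 and k ≥ 1, the matching polynomial of the graph T(r,k) is μ(T(r,k),x) = x^{r(k−1)+1} (x² − r − k)(x² − k)^{r−1}. -/
open Polynomial

/-- The graph `T(r,k)`: `r` disjoint copies of `K_{1,k}` (the `i`-th has centre `some (i, none)`
and leaves `some (i, some j)`) together with an extra vertex `none` adjacent to exactly the `r`
centres. -/
def TGraph (r k : ℕ) : SimpleGraph (Option (Fin r × Option (Fin k))) :=
  SimpleGraph.fromRel fun x y =>
    (∃ i, x = none ∧ y = some (i, none)) ∨
    (∃ i j, x = some (i, none) ∧ y = some (i, some j))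

set_option linter.unusedSectionVars false
set_option maxHeartbeats 1000000
section AuxTP
namespace TP
open Finset

variable {r k : ℕ}

abbrev V (r k : ℕ) := Option (Fin r × Option (Fin k))

def oth (p : Fin r × Option (Fin k)) : V r k := p.2.elim none (fun j => some (p.1, some j))

def edgeOf (p : Fin r × Option (Fin k)) : Sym2 (V r k) := s(some (p.1, none), oth p)

lemma oth_ne_center (p q : Fin r × Option (Fin k)) : oth p ≠ some (q.1, none) := by
  rcases p with ⟨i, _ | j⟩ <;> simp [oth]

lemma mem_edgeOf {v : V r k} {p : Fin r × Option (Fin k)} :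
    v ∈ edgeOf p ↔ v = some (p.1, none) ∨ v = oth p := Sym2.mem_iff

lemma edgeOf_injective : Function.Injective (edgeOf (r := r) (k := k)) := by
  rintro ⟨i, o⟩ ⟨i', o'⟩ h
  rw [edgeOf, edgeOf, Sym2.eq_iff] at h
  rcases h with ⟨h1, h2⟩ | ⟨h1, h2⟩
  · rcases o with _ | j <;> rcases o' with _ | j' <;> simp_all [oth]
  · exact absurd h1.symm (by exact fun hh => oth_ne_center (i', o') (i, o) hh)

lemma edgeOf_mem_edgeSet (p : Fin r × Option (Fin k)) :
    edgeOf p ∈ (TGraph r k).edgeSet := by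
  rcases p with ⟨i, _ | j⟩
  · rw [edgeOf, SimpleGraph.mem_edgeSet, oth]
    rw [show (Option.elim none none fun j => some (i, some j) : V r k) = none from rfl]
    rw [TGraph, SimpleGraph.fromRel_adj]
    exact ⟨by simp, Or.inr (Or.inl ⟨i, rfl, rfl⟩)⟩
  · rw [edgeOf, SimpleGraph.mem_edgeSet, oth]
    rw [show (Option.elim (some j) none fun j => some (i, some j) : V r k) = some (i, some j) from rfl]
    rw [TGraph, SimpleGraph.fromRel_adj]
    exact ⟨by simp, Or.inl (Or.inr ⟨i, j, rfl, rfl⟩)⟩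

lemma mem_edgeSet_iff {e : Sym2 (V r k)} :
    e ∈ (TGraph r k).edgeSet ↔ ∃ p, e = edgeOf p := by
  constructor
  · induction e with
  | _ x y =>
    intro h
    rw [SimpleGraph.mem_edgeSet, TGraph, SimpleGraph.fromRel_adj] at h
    rcases h with ⟨-, h | h⟩
    · rcases h with ⟨i, rfl, rfl⟩ | ⟨i, j, rfl, rfl⟩
      · exact ⟨(i, none), Sym2.eq_swap⟩
      · exact ⟨(i, some j), rfl⟩
    · rcases h with ⟨i, rfl, rfl⟩ | ⟨i, j, rfl, rfl⟩
      · exact ⟨(i, none), rfl⟩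
      · exact ⟨(i, some j), Sym2.eq_swap⟩
  · rintro ⟨p, rfl⟩; exact edgeOf_mem_edgeSet p

lemma disjoint_edgeOf {p q : Fin r × Option (Fin k)} (h1 : p.1 ≠ q.1)
    (h2 : ¬(p.2 = none ∧ q.2 = none)) : ∀ v ∈ edgeOf p, v ∉ edgeOf q := by
  intro v hvp hvq
  rw [mem_edgeOf] at hvp hvq
  rcases p with ⟨i, o⟩; rcases q with ⟨i', o'⟩
  rcases hvp with rfl | rfl <;> rcases hvq with h | h <;>
    rcases o with _ | j <;> rcases o' with _ | j' <;> simp_all [oth]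


section Count


variable {α β : Type*} [Fintype α] [DecidableEq α] [Fintype β] [DecidableEq β]

def fsupp (g : α → Option β) : Finset α := univ.filter (fun i => g i ≠ none)

lemma mem_fsupp {g : α → Option β} {i : α} : i ∈ fsupp g ↔ g i ≠ none := by
  simp [fsupp]

theorem count_partial (A : Finset α) (t : ℕ) :
    (univ.filter (fun g : α → Option β => fsupp g ⊆ A ∧ (fsupp g).card = t)).card
      = A.card.choose t * Fintype.card β ^ t := by
  classical
  rw [Finset.card_eq_sum_card_fiberwise (f := fsupp) (t := Finset.powersetCard t A)
    (fun g hg => by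
      rw [Finset.mem_coe, mem_filter] at hg
      exact Finset.mem_powersetCard.mpr ⟨hg.2.1, hg.2.2⟩)]
  have key : ∀ B ∈ Finset.powersetCard t A,
      ((univ.filter (fun g : α → Option β => fsupp g ⊆ A ∧ (fsupp g).card = t)).filter
        (fun g => fsupp g = B)).card = Fintype.card β ^ t := by
    intro B hB
    rw [Finset.mem_powersetCard] at hB
    have hfe : ((univ.filter (fun g : α → Option β => fsupp g ⊆ A ∧ (fsupp g).card = t)).filter
        (fun g => fsupp g = B)) = univ.filter (fun g : α → Option β => fsupp g = B) := by
      ext g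
      simp only [mem_filter, mem_univ, true_and]
      constructor
      · exact fun h => h.2
      · rintro rfl
        exact ⟨⟨hB.1, hB.2⟩, rfl⟩
    rw [hfe]
    have hcard : (univ.filter (fun g : α → Option β => fsupp g = B)).card
        = (B.pi (fun _ => (univ : Finset β))).card := by
      refine Finset.card_bij'
        (fun g hg => fun b hb => (g b).get ?_)
        (fun f _ => fun i => if h : i ∈ B then some (f i h) else none)
        ?_ ?_ ?_ ?_
      · rw [mem_filter] at hg
        rw [Option.isSome_iff_ne_none]
        rw [← hg.2] at hb
        exact mem_fsupp.mp hb
      · intro g hg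
        exact Finset.mem_pi.mpr (fun a h => mem_univ _)
      · intro f hf
        rw [mem_filter]
        refine ⟨mem_univ _, ?_⟩
        ext i
        by_cases h : i ∈ B <;> simp [mem_fsupp, h]
      · intro g hg
        funext i
        rw [mem_filter] at hg
        by_cases h : i ∈ B
        · simp only [h, dif_pos, Option.some_get]
        · simp only [h, dif_neg, not_false_iff]
          rw [← hg.2] at h
          exact (by simpa [mem_fsupp] using h : g i = none).symm
      · intro f hf
        funext b hb
        simp [hb]
    rw [hcard, Finset.card_pi]
    rw [Finset.prod_const, Finset.card_univ, hB.2]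
  rw [Finset.sum_congr rfl key, Finset.sum_const, Finset.card_powersetCard, smul_eq_mul]


variable {γ : Type*} [Fintype γ] [DecidableEq γ]

def Hub (g : α → Option (Option γ)) : Prop :=
  ∀ i i', g i = some none → g i' = some none → i = i'

instance decHub : DecidablePred (fun g : α → Option (Option γ) => Hub g) :=
  fun _ => by unfold Hub; infer_instance

noncomputable def hubIdx [Nonempty α] (g : α → Option (Option γ)) : α :=
  if h : ∃ i, g i = some none then h.choose else Classical.arbitrary α

lemma hubIdx_spec [Nonempty α] {g : α → Option (Option γ)} (h : ∃ i, g i = some none) :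
    g (hubIdx g) = some none := by
  rw [hubIdx, dif_pos h]; exact h.choose_spec

def strip (g : α → Option (Option γ)) : α → Option γ := fun i => (g i).bind id

lemma strip_ne_none {o : Option (Option γ)} : o.bind id ≠ none ↔ ∃ c, o = some (some c) := by
  rcases o with _ | (_ | c) <;> simp

lemma mem_fsupp_strip {g : α → Option (Option γ)} {i : α} :
    i ∈ fsupp (strip g) ↔ ∃ c, g i = some (some c) := by
  rw [mem_fsupp]; exact strip_ne_none

theorem count_main [Nonempty α] (t : ℕ) :
    (univ.filter (fun g : α → Option (Option γ) => Hub g ∧ (fsupp g).card = t)).card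
      = (Fintype.card α).choose t * Fintype.card γ ^ t
        + (if t = 0 then 0 else
            Fintype.card α * ((Fintype.card α - 1).choose (t-1) * Fintype.card γ ^ (t-1))) := by
  classical
  set S0 := univ.filter (fun g : α → Option (Option γ) =>
    (∀ i, g i ≠ some none) ∧ (fsupp g).card = t) with hS0
  set S1 := univ.filter (fun g : α → Option (Option γ) =>
    Hub g ∧ (∃ i, g i = some none) ∧ (fsupp g).card = t) with hS1
  have hsplit : univ.filter (fun g : α → Option (Option γ) => Hub g ∧ (fsupp g).card = t)
      = S0 ∪ S1 := by
    ext g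
    simp only [hS0, hS1, mem_union, mem_filter, mem_univ, true_and]
    constructor
    · rintro ⟨hh, hc⟩
      by_cases he : ∃ i, g i = some none
      · exact Or.inr ⟨hh, he, hc⟩
      · push_neg at he
        exact Or.inl ⟨he, hc⟩
    · rintro (⟨hn, hc⟩ | ⟨hh, -, hc⟩)
      · exact ⟨fun i i' h _ => absurd h (hn i), hc⟩
      · exact ⟨hh, hc⟩
  have hdisj : Disjoint S0 S1 := by
    rw [Finset.disjoint_left]
    intro g h0 h1
    rw [hS0, mem_filter] at h0
    rw [hS1, mem_filter] at h1
    obtain ⟨i, hi⟩ := h1.2.2.1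
    exact h0.2.1 i hi
  rw [hsplit, Finset.card_union_of_disjoint hdisj]
  -- count S0
  have hc0 : S0.card = (Fintype.card α).choose t * Fintype.card γ ^ t := by
    have : S0.card = (univ.filter (fun g' : α → Option γ =>
        fsupp g' ⊆ univ ∧ (fsupp g').card = t)).card := by
      refine Finset.card_bij' (fun g _ => strip g)
        (fun g' _ => fun i => (g' i).map some) ?_ ?_ ?_ ?_
      · intro g hg
        rw [hS0, mem_filter] at hg
        rw [mem_filter]
        refine ⟨mem_univ _, subset_univ _, ?_⟩
        have : fsupp (strip g) = fsupp g := by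
          ext i
          rw [mem_fsupp_strip, mem_fsupp]
          rcases h : g i with _ | (_ | c)
          · simp
          · exact absurd h (hg.2.1 i)
          · simp
        rw [this, hg.2.2]
      · intro g' hg'
        rw [mem_filter] at hg'
        rw [hS0, mem_filter]
        refine ⟨mem_univ _, fun i => ?_, ?_⟩
        · rcases h : g' i with _ | c <;> simp [h]
        · have : fsupp (fun i => (g' i).map some) = fsupp g' := by
            ext i
            rw [mem_fsupp, mem_fsupp]
            rcases h : g' i with _ | c <;> simp [h]
          rw [this, hg'.2.2]
      · intro g hg
        rw [hS0, mem_filter] at hg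
        funext i
        rcases h : g i with _ | (_ | c)
        · simp [strip, h]
        · exact absurd h (hg.2.1 i)
        · simp [strip, h]
      · intro g' hg'
        funext i
        rcases h : g' i with _ | c <;> simp [strip, h]
    rw [this, count_partial, Finset.card_univ]
  rw [hc0]
  congr 1
  -- count S1
  rcases t with _ | t'
  · have : S1 = ∅ := by
      rw [Finset.eq_empty_iff_forall_notMem]
      intro g hg
      rw [hS1, mem_filter] at hg
      obtain ⟨i, hi⟩ := hg.2.2.1
      have : i ∈ fsupp g := mem_fsupp.mpr (by rw [hi]; simp)
      rw [Finset.card_eq_zero] at hg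
      · exact absurd (hg.2.2.2 ▸ this : i ∈ (∅:Finset α)) (Finset.notMem_empty i)
    simp [this]
  · simp only [Nat.succ_ne_zero, if_false, Nat.add_sub_cancel]
    rw [Finset.card_eq_sum_card_fiberwise (f := hubIdx) (t := univ) (fun g _ => mem_univ _)]
    have hfib : ∀ i0 : α, S1.filter (fun g => hubIdx g = i0)
        = univ.filter (fun g : α → Option (Option γ) =>
            Hub g ∧ g i0 = some none ∧ (fsupp g).card = t'+1) := by
      intro i0
      ext g
      simp only [hS1, Finset.filter_filter, mem_filter, mem_univ, true_and]
      constructor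
      · rintro ⟨⟨hh, he, hc⟩, heq⟩
        refine ⟨hh, ?_, hc⟩
        rw [← heq]
        exact hubIdx_spec he
      · rintro ⟨hh, hi0, hc⟩
        have he : ∃ i, g i = some none := ⟨i0, hi0⟩
        exact ⟨⟨hh, he, hc⟩, hh _ _ (hubIdx_spec he) hi0⟩
    have hcard : ∀ i0 : α, (univ.filter (fun g : α → Option (Option γ) =>
        Hub g ∧ g i0 = some none ∧ (fsupp g).card = t'+1)).card
        = (Fintype.card α - 1).choose t' * Fintype.card γ ^ t' := by
      intro i0
      have : (univ.filter (fun g : α → Option (Option γ) =>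
          Hub g ∧ g i0 = some none ∧ (fsupp g).card = t'+1)).card
          = (univ.filter (fun g' : α → Option γ =>
              fsupp g' ⊆ univ.erase i0 ∧ (fsupp g').card = t')).card := by
        refine Finset.card_bij' (fun g _ => strip g)
          (fun g' _ => fun i => if i = i0 then some none else (g' i).map some) ?_ ?_ ?_ ?_
        · intro g hg
          rw [mem_filter] at hg
          obtain ⟨-, hh, hi0, hc⟩ := hg
          have hsupp : fsupp (strip g) = (fsupp g).erase i0 := by
            ext i
            rw [mem_fsupp_strip, Finset.mem_erase, mem_fsupp]
            constructor
            · rintro ⟨c, hc'⟩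
              refine ⟨fun he => ?_, by rw [hc']; simp⟩
              rw [he, hi0] at hc'
              simp at hc'
            · rintro ⟨hne, hnn⟩
              rcases h : g i with _ | (_ | c)
              · exact absurd h hnn
              · exact absurd (hh _ _ h hi0) hne
              · exact ⟨c, rfl⟩
          rw [mem_filter, hsupp]
          refine ⟨mem_univ _, Finset.erase_subset_erase _ (subset_univ _), ?_⟩
          rw [Finset.card_erase_of_mem (mem_fsupp.mpr (by rw [hi0]; simp)), hc]
          simp
        · intro g' hg'
          rw [mem_filter] at hg'
          obtain ⟨-, hsub, hc⟩ := hg'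
          have hi0n : g' i0 = none := by
            by_contra h
            exact absurd (hsub (mem_fsupp.mpr h)) (by simp)
          rw [mem_filter]
          refine ⟨mem_univ _, ?_, by simp, ?_⟩
          · intro i i' hi hi'
            have key : ∀ j, (if j = i0 then some none else (g' j).map some) = some none → j = i0 := by
              intro j hj
              by_contra hne
              rw [if_neg hne] at hj
              rcases h : g' j with _ | c <;> rw [h] at hj <;> simp at hj
            rw [key i hi, key i' hi']
          · have hsupp : fsupp (fun i => if i = i0 then some none else (g' i).map some)
                = insert i0 (fsupp g') := by
              ext i
              rw [mem_fsupp, Finset.mem_insert, mem_fsupp]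
              by_cases h : i = i0
              · simp [h]
              · rw [if_neg h]
                rcases hgg : g' i with _ | c <;> simp [h, hgg]
            rw [hsupp, Finset.card_insert_of_notMem (fun h => by
              simpa using hsub h), hc]
        · intro g hg
          rw [mem_filter] at hg
          obtain ⟨-, hh, hi0, -⟩ := hg
          funext i
          show (if i = i0 then (some none : Option (Option γ)) else ((strip g) i).map some) = g i
          by_cases h : i = i0
          · rw [if_pos h, h, hi0]
          · rw [if_neg h]
            rcases hgi : g i with _ | (_ | c)
            · simp [strip, hgi]
            · exact absurd (hh _ _ hgi hi0) h
            · simp [strip, hgi]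
        · intro g' hg'
          rw [mem_filter] at hg'
          have hi0n : g' i0 = none := by
            by_contra h
            exact absurd (hg'.2.1 (mem_fsupp.mpr h)) (by simp)
          funext i
          by_cases h : i = i0
          · simp [strip, h, hi0n]
          · rcases hgi : g' i with _ | c <;> simp [strip, h, hgi]
      rw [this, count_partial, Finset.card_erase_of_mem (mem_univ _), Finset.card_univ]
    calc ∑ i0 ∈ univ, (S1.filter (fun g => hubIdx g = i0)).card
        = ∑ i0 ∈ univ, (Fintype.card α - 1).choose t' * Fintype.card γ ^ t' := by
          refine Finset.sum_congr rfl (fun i0 _ => ?_)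
          rw [hfib i0, hcard i0]
      _ = Fintype.card α * ((Fintype.card α - 1).choose t' * Fintype.card γ ^ t') := by
          rw [Finset.sum_const, Finset.card_univ, smul_eq_mul]

end Count

section Encode

variable {r k : ℕ}

def pairsOf (g : Fin r → Option (Option (Fin k))) : Finset (Fin r × Option (Fin k)) :=
  univ.filter (fun p => g p.1 = some p.2)

def encode (g : Fin r → Option (Option (Fin k))) : Finset (Sym2 (V r k)) :=
  (pairsOf g).image edgeOf

lemma mem_encode {e : Sym2 (V r k)} {g : Fin r → Option (Option (Fin k))} :
    e ∈ encode g ↔ ∃ p, g p.1 = some p.2 ∧ e = edgeOf p := by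
  simp only [encode, Finset.mem_image, pairsOf, mem_filter, mem_univ, true_and]
  constructor
  · rintro ⟨p, hp, rfl⟩; exact ⟨p, hp, rfl⟩
  · rintro ⟨p, hp, rfl⟩; exact ⟨p, hp, rfl⟩

lemma edgeOf_mem_encode {p : Fin r × Option (Fin k)} {g : Fin r → Option (Option (Fin k))} :
    edgeOf p ∈ encode g ↔ g p.1 = some p.2 := by
  rw [mem_encode]
  constructor
  · rintro ⟨q, hq, heq⟩
    cases edgeOf_injective heq; exact hq
  · intro h; exact ⟨p, h, rfl⟩

lemma card_encode (g : Fin r → Option (Option (Fin k))) :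
    (encode g).card = (fsupp g).card := by
  rw [encode, Finset.card_image_of_injective _ edgeOf_injective]
  have himg : (pairsOf g).image Prod.fst = fsupp g := by
    ext i
    simp only [Finset.mem_image, pairsOf, mem_filter, mem_univ, true_and, mem_fsupp]
    constructor
    · rintro ⟨p, hp, rfl⟩; rw [hp]; simp
    · intro h
      obtain ⟨v, hv⟩ := Option.ne_none_iff_exists'.mp h
      exact ⟨(i, v), hv, rfl⟩
  have hinj : Set.InjOn (Prod.fst : Fin r × Option (Fin k) → Fin r) ↑(pairsOf g) := by
    intro p hp q hq h
    simp only [pairsOf, coe_filter, Set.mem_setOf_eq] at hp hq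
    refine Prod.ext h (Option.some_injective _ ?_)
    rw [← hp.2, ← hq.2, h]
  rw [← himg, Finset.card_image_of_injOn hinj]

lemma encode_injective : Function.Injective (encode (r := r) (k := k)) := by
  intro g g' h
  have key : ∀ i v, g i = some v ↔ g' i = some v := by
    intro i v
    rw [← edgeOf_mem_encode (p := (i, v)), ← edgeOf_mem_encode (p := (i, v)), h]
  funext i
  rcases hgi : g i with _ | v
  · rcases hg'i : g' i with _ | v'
    · rfl
    · exact absurd ((key i v').mpr hg'i) (by rw [hgi]; simp)
  · exact ((key i v).mp hgi).symm

lemma encode_matching {g : Fin r → Option (Option (Fin k))} (hh : Hub g) :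
    (TGraph r k).IsMatchingFinset (encode g) := by
  constructor
  · intro e he
    obtain ⟨p, -, rfl⟩ := mem_encode.mp he
    exact edgeOf_mem_edgeSet p
  · intro e he f hf hne v hv hvf
    obtain ⟨p, hp, rfl⟩ := mem_encode.mp he
    obtain ⟨q, hq, rfl⟩ := mem_encode.mp hf
    have h1 : p.1 ≠ q.1 := by
      intro h
      apply hne
      congr 1
      refine Prod.ext h (Option.some_injective _ ?_)
      rw [← hp, ← hq, h]
    have h2 : ¬(p.2 = none ∧ q.2 = none) := by
      rintro ⟨e1, e2⟩
      rw [e1] at hp; rw [e2] at hq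
      exact h1 (hh _ _ hp hq)
    exact disjoint_edgeOf h1 h2 v hv hvf

lemma matching_set_eq (t : ℕ) :
    {s : Finset (Sym2 (V r k)) | s.card = t ∧ (TGraph r k).IsMatchingFinset s}
      = encode '' {g | Hub g ∧ (fsupp g).card = t} := by
  classical
  ext s
  constructor
  · rintro ⟨hcard, hsub, hpair⟩
    have u1 : ∀ i (v v' : Option (Fin k)), edgeOf (i, v) ∈ s → edgeOf (i, v') ∈ s → v = v' := by
      intro i v v' h h'
      by_contra hne
      have hneq : edgeOf (i, v) ≠ edgeOf (i, v') := fun hh =>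
        hne (congrArg Prod.snd (edgeOf_injective hh))
      exact hpair h h' hneq (some (i, none)) (mem_edgeOf.mpr (Or.inl rfl))
        (mem_edgeOf.mpr (Or.inl rfl))
    set g : Fin r → Option (Option (Fin k)) :=
      fun i => if h : ∃ v, edgeOf (i, v) ∈ s then some h.choose else none with hgdef
    have hgspec : ∀ i v, g i = some v ↔ edgeOf (i, v) ∈ s := by
      intro i v
      constructor
      · intro h
        rw [hgdef] at h
        simp only at h
        split_ifs at h with hex
        · obtain ⟨rfl⟩ := Option.some_injective _ h
          exact hex.choose_spec
      · intro h
        have hex : ∃ v, edgeOf (i, v) ∈ s := ⟨v, h⟩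
        rw [hgdef]
        simp only [dif_pos hex]
        exact congrArg some (u1 i _ v hex.choose_spec h)
    have hhub : Hub g := by
      intro i i' hi hi'
      rw [hgspec] at hi hi'
      by_contra hne
      have hneq : edgeOf (i, (none : Option (Fin k))) ≠ edgeOf (i', none) := fun hh =>
        hne (congrArg Prod.fst (edgeOf_injective hh))
      exact hpair hi hi' hneq none (mem_edgeOf.mpr (Or.inr rfl)) (mem_edgeOf.mpr (Or.inr rfl))
    have henc : encode g = s := by
      ext e
      rw [mem_encode]
      constructor
      · rintro ⟨p, hp, rfl⟩
        exact (hgspec p.1 p.2).mp hp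
      · intro he
        obtain ⟨p, rfl⟩ := mem_edgeSet_iff.mp (hsub he)
        exact ⟨p, (hgspec p.1 p.2).mpr he, rfl⟩
    exact ⟨g, ⟨hhub, by rw [← card_encode, henc, hcard]⟩, henc⟩
  · rintro ⟨g, ⟨hh, hc⟩, rfl⟩
    exact ⟨by rw [card_encode, hc], encode_matching hh⟩

lemma numMatchings_TGraph (hr : 1 ≤ r) (t : ℕ) :
    (TGraph r k).numMatchings t
      = r.choose t * k ^ t
        + (if t = 0 then 0 else r * ((r - 1).choose (t - 1) * k ^ (t - 1))) := by
  have : Nonempty (Fin r) := ⟨⟨0, hr⟩⟩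
  rw [SimpleGraph.numMatchings, matching_set_eq,
    Set.ncard_image_of_injective _ encode_injective]
  have hset : {g : Fin r → Option (Option (Fin k)) | Hub g ∧ (fsupp g).card = t}
      = ↑(univ.filter (fun g : Fin r → Option (Option (Fin k)) =>
          Hub g ∧ (fsupp g).card = t)) := by
    ext g; simp
  rw [hset, Set.ncard_coe_finset, count_main t]
  simp [Fintype.card_fin]

end Encode

lemma expandPow (c : ℝ) (N M : ℕ) :
    X ^ M * (X ^ 2 - C c) ^ N
      = ∑ t ∈ Finset.range (N + 1),
          C ((-1) ^ t * c ^ t * (N.choose t : ℝ)) * X ^ (M + 2 * (N - t)) := by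
  conv_lhs => rw [sub_pow, Finset.mul_sum, ← Finset.sum_range_reflect]
  refine Finset.sum_congr rfl (fun j hj => ?_)
  rw [Finset.mem_range, Nat.lt_succ_iff] at hj
  rw [show N + 1 - 1 - j = N - j from by omega]
  rw [Nat.choose_symm hj, show N - (N - j) = j from by omega]
  rw [show (N - j) + N = j + 2 * (N - j) from by omega, pow_add, pow_mul, neg_one_sq, one_pow]
  simp only [C_mul, C_pow, map_neg, map_one, Polynomial.C_eq_natCast]
  ring

end TP
end AuxTP

/-- The matching polynomial of `T(r,k)` is `x^(r(k-1)+1) (x² - r - k)(x² - k)^(r-1)`. -/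
theorem matchingPolynomial_TGraph (r k : ℕ) (hr : 1 ≤ r) (hk : 1 ≤ k) :
    (TGraph r k).matchingPolynomial =
      X ^ (r * (k - 1) + 1) * (X ^ 2 - C ((r : ℝ) + (k : ℝ))) * (X ^ 2 - C (k : ℝ)) ^ (r - 1) := by
  
  classical
  obtain ⟨R, rfl⟩ : ∃ R, r = R + 1 := ⟨r - 1, by omega⟩
  obtain ⟨K, rfl⟩ : ∃ K, k = K + 1 := ⟨k - 1, by omega⟩
  obtain ⟨P, hPdef⟩ : ∃ P, (R+1)*K = P := ⟨_, rfl⟩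
  have hn : Fintype.card (TP.V (R+1) (K+1)) = P + 2*R + 3 := by
    simp only [TP.V, Fintype.card_option, Fintype.card_prod, Fintype.card_fin, ← hPdef]
    ring
  rw [SimpleGraph.matchingPolynomial]
  rw [hn]
  set n := P + 2*R + 3 with hndef
  have hstep1 : ∑ t ∈ Finset.range (n + 1),
      C ((-1 : ℝ) ^ t * ((TGraph (R+1) (K+1)).numMatchings t : ℝ)) * X ^ (n - 2 * t)
      = (∑ t ∈ Finset.range (n + 1),
          C ((-1 : ℝ) ^ t * (((R+1).choose t * (K+1) ^ t : ℕ) : ℝ)) * X ^ (n - 2 * t))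
        + ∑ t ∈ Finset.range (n + 1),
          C ((-1 : ℝ) ^ t * (((if t = 0 then 0 else (R+1) * (R.choose (t-1) * (K+1)^(t-1))) : ℕ) : ℝ))
            * X ^ (n - 2 * t) := by
    rw [← Finset.sum_add_distrib]
    refine Finset.sum_congr rfl (fun t _ => ?_)
    rw [TP.numMatchings_TGraph (by omega) t]
    rw [show ((R+1) - 1 : ℕ) = R from by omega]
    rw [Nat.cast_add, mul_add, map_add, add_mul]
  rw [hstep1]
  have hA : ∑ t ∈ Finset.range (n + 1),
      C ((-1 : ℝ) ^ t * (((R+1).choose t * (K+1) ^ t : ℕ) : ℝ)) * X ^ (n - 2 * t)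
      = X ^ (P+1) * (X ^ 2 - C ((K : ℝ) + 1)) ^ (R+1) := by
    rw [TP.expandPow]
    rw [← Finset.sum_subset (Finset.range_subset_range.mpr (show R + 2 ≤ n + 1 from by omega) :
      Finset.range (R+2) ⊆ Finset.range (n+1)) ?van]
    case van =>
      intro t _ ht
      rw [Finset.mem_range] at ht
      push_neg at ht
      rw [Nat.choose_eq_zero_of_lt (by omega)]
      simp
    refine Finset.sum_congr rfl (fun t ht => ?_)
    rw [Finset.mem_range, Nat.lt_succ_iff] at ht
    rw [show P+1 + 2*((R+1) - t) = n - 2*t from by omega]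
    congr 1
    congr 1
    push_cast
    ring
  have hB : ∑ t ∈ Finset.range (n + 1),
      C ((-1 : ℝ) ^ t * (((if t = 0 then 0 else (R+1) * (R.choose (t-1) * (K+1)^(t-1))) : ℕ) : ℝ))
        * X ^ (n - 2 * t)
      = -C ((R : ℝ) + 1) * (X ^ (P+1) * (X ^ 2 - C ((K : ℝ) + 1)) ^ R) := by
    rw [Finset.sum_range_succ']
    have h0 : C ((-1 : ℝ) ^ 0 * (((if (0:ℕ) = 0 then 0 else (R+1) * (R.choose (0-1) * (K+1)^(0-1))) : ℕ) : ℝ)) * X ^ (n - 2 * 0) = 0 := by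
      simp
    rw [h0, add_zero]
    rw [TP.expandPow, Finset.mul_sum]
    rw [← Finset.sum_subset (Finset.range_subset_range.mpr (show R + 1 ≤ n from by omega) :
      Finset.range (R+1) ⊆ Finset.range n) ?vanB]
    case vanB =>
      intro t _ ht
      rw [Finset.mem_range] at ht
      push_neg at ht
      simp only [Nat.succ_ne_zero, if_false, Nat.add_sub_cancel]
      rw [Nat.choose_eq_zero_of_lt (by omega)]
      simp
    refine Finset.sum_congr rfl (fun s hs => ?_)
    rw [Finset.mem_range, Nat.lt_succ_iff] at hs
    simp only [Nat.succ_ne_zero, if_false, Nat.add_sub_cancel]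
    rw [show P+1 + 2*(R - s) = n - 2*(s+1) from by omega]
    have hc : ((-1 : ℝ)) ^ (s+1) * (((R+1) * (R.choose s * (K+1)^s) : ℕ) : ℝ)
        = -((((R:ℝ)+1)) * ((-1:ℝ)^s * ((K:ℝ)+1)^s * ((R.choose s : ℕ):ℝ))) := by
      push_cast; ring
    rw [hc, map_neg, C_mul]
    ring
  rw [hA, hB]
  rw [show (R+1) * ((K+1) - 1) + 1 = P + 1 from by rw [Nat.add_sub_cancel, hPdef]]
  rw [show (R+1) - 1 = R from by omega]
  push_cast
  simp only [map_add, map_one]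
  ring
end

section
/- For all integers k ≥ 1, t ≥ 0 and 1 ≤ ℓ ≤ k, the matching polynomial of the graph K(k,t;ℓ) is μ(K(k,t;ℓ),x) = x^{k+t−2} (x⁴ − (k+t+ℓ)x² + (ℓ+t)(k−1) + t). -/
open Polynomial

/-- The graph `K(k,t;ℓ)`: a star `K_{1,k}` with centre `some (Sum.inl none)` and leaves
`some (Sum.inl (some j))`, `t` further vertices `some (Sum.inr i)`, and an extra vertex `none`
adjacent to exactly the first `ℓ` leaves of the star (not to its centre) and to all `t` further
vertices. -/
def KGraph (k t ℓ : ℕ) : SimpleGraph (Option (Option (Fin k) ⊕ Fin t)) :=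
  SimpleGraph.fromRel fun x y =>
    (∃ j : Fin k, x = some (Sum.inl none) ∧ y = some (Sum.inl (some j))) ∨
    (∃ j : Fin k, (j : ℕ) < ℓ ∧ x = none ∧ y = some (Sum.inl (some j))) ∨
    (∃ i : Fin t, x = none ∧ y = some (Sum.inr i))


namespace KAux
variable {k t ℓ : ℕ}

abbrev KV (k t : ℕ) := Option (Option (Fin k) ⊕ Fin t)
def cV : KV k t := some (Sum.inl none)
def uV : KV k t := none
def leafV (j : Fin k) : KV k t := some (Sum.inl (some j))
def wV (i : Fin t) : KV k t := some (Sum.inr i)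

lemma adj_iff (x y : KV k t) :
    (KGraph k t ℓ).Adj x y ↔
      (∃ j : Fin k, (x = cV ∧ y = leafV j) ∨ (y = cV ∧ x = leafV j)) ∨
      (∃ j : Fin k, (j : ℕ) < ℓ ∧ ((x = uV ∧ y = leafV j) ∨ (y = uV ∧ x = leafV j))) ∨
      (∃ i : Fin t, (x = uV ∧ y = wV i) ∨ (y = uV ∧ x = wV i)) := by
  simp only [KGraph, SimpleGraph.fromRel_adj, cV, uV, leafV, wV]
  constructor
  · rintro ⟨hne, (⟨j, hx, hy⟩ | ⟨j, hj, hx, hy⟩ | ⟨i, hx, hy⟩) | (⟨j, hx, hy⟩ | ⟨j, hj, hx, hy⟩ | ⟨i, hx, hy⟩)⟩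
    · exact Or.inl ⟨j, Or.inl ⟨hx, hy⟩⟩
    · exact Or.inr (Or.inl ⟨j, hj, Or.inl ⟨hx, hy⟩⟩)
    · exact Or.inr (Or.inr ⟨i, Or.inl ⟨hx, hy⟩⟩)
    · exact Or.inl ⟨j, Or.inr ⟨hx, hy⟩⟩
    · exact Or.inr (Or.inl ⟨j, hj, Or.inr ⟨hx, hy⟩⟩)
    · exact Or.inr (Or.inr ⟨i, Or.inr ⟨hx, hy⟩⟩)
  · rintro (⟨j, ⟨hx, hy⟩ | ⟨hy, hx⟩⟩ | ⟨j, hj, ⟨hx, hy⟩ | ⟨hy, hx⟩⟩ | ⟨i, ⟨hx, hy⟩ | ⟨hy, hx⟩⟩) <;>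
      subst hx <;> subst hy <;> simp <;> tauto

end KAux

namespace KAux
variable {k t ℓ : ℕ}

lemma edge_iff (e : Sym2 (KV k t)) :
    e ∈ (KGraph k t ℓ).edgeSet ↔
      (∃ j : Fin k, e = s(cV, leafV j)) ∨
      (∃ j : Fin k, (j : ℕ) < ℓ ∧ e = s(uV, leafV j)) ∨
      (∃ i : Fin t, e = s(uV, wV i)) := by
  induction e using Sym2.inductionOn with
  | hf x y =>
    rw [SimpleGraph.mem_edgeSet, adj_iff]
    constructor
    · rintro (⟨j, ⟨hx, hy⟩ | ⟨hy, hx⟩⟩ | ⟨j, hj, ⟨hx, hy⟩ | ⟨hy, hx⟩⟩ | ⟨i, ⟨hx, hy⟩ | ⟨hy, hx⟩⟩) <;>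
        subst hx <;> subst hy
      · exact Or.inl ⟨j, rfl⟩
      · exact Or.inl ⟨j, Sym2.eq_swap⟩
      · exact Or.inr (Or.inl ⟨j, hj, rfl⟩)
      · exact Or.inr (Or.inl ⟨j, hj, Sym2.eq_swap⟩)
      · exact Or.inr (Or.inr ⟨i, rfl⟩)
      · exact Or.inr (Or.inr ⟨i, Sym2.eq_swap⟩)
    · rintro (⟨j, he⟩ | ⟨j, hj, he⟩ | ⟨i, he⟩) <;> rw [Sym2.eq_iff] at he <;>
        [skip; skip; skip] <;>
        rcases he with ⟨hx, hy⟩ | ⟨hx, hy⟩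
      · exact Or.inl ⟨j, Or.inl ⟨hx, hy⟩⟩
      · exact Or.inl ⟨j, Or.inr ⟨hy, hx⟩⟩
      · exact Or.inr (Or.inl ⟨j, hj, Or.inl ⟨hx, hy⟩⟩)
      · exact Or.inr (Or.inl ⟨j, hj, Or.inr ⟨hy, hx⟩⟩)
      · exact Or.inr (Or.inr ⟨i, Or.inl ⟨hx, hy⟩⟩)
      · exact Or.inr (Or.inr ⟨i, Or.inr ⟨hy, hx⟩⟩)

lemma c_or_u_mem {e : Sym2 (KV k t)} (he : e ∈ (KGraph k t ℓ).edgeSet) :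
    cV ∈ e ∨ (uV : KV k t) ∈ e := by
  rcases (edge_iff e).1 he with ⟨j, rfl⟩ | ⟨j, hj, rfl⟩ | ⟨i, rfl⟩
  · exact Or.inl (Sym2.mem_mk_left _ _)
  · exact Or.inr (Sym2.mem_mk_left _ _)
  · exact Or.inr (Sym2.mem_mk_left _ _)

end KAux

namespace KAux
variable {k t ℓ : ℕ}

lemma matching_card_le {s : Finset (Sym2 (KV k t))} (hs : (KGraph k t ℓ).IsMatchingFinset s) :
    s.card ≤ 2 := by
  have : s.card ≤ (Finset.univ : Finset Bool).card := by
    apply Finset.card_le_card_of_injOn (fun e => decide (cV ∈ e))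
    · intro _ _; exact Finset.mem_univ _
    · intro e he f hf hef
      by_contra hne
      have hpw := hs.2 (by simpa using he) (by simpa using hf) hne
      by_cases hc : cV ∈ e
      · have hc' : cV ∈ f := by
          by_contra h; simp [hc, h] at hef
        exact hpw cV hc hc'
      · have hc' : cV ∉ f := by
          by_contra h; simp [hc, h] at hef
        have h1 := (c_or_u_mem (ℓ := ℓ) (hs.1 (by simpa using he))).resolve_left hc
        have h2 := (c_or_u_mem (ℓ := ℓ) (hs.1 (by simpa using hf))).resolve_left hc'
        exact hpw uV h1 h2
  simpa using this

lemma numMatchings_zero : (KGraph k t ℓ).numMatchings 0 = 1 := by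
  have : {s : Finset (Sym2 (KV k t)) | s.card = 0 ∧ (KGraph k t ℓ).IsMatchingFinset s}
      = {∅} := by
    ext s
    simp only [Set.mem_setOf_eq, Set.mem_singleton_iff, Finset.card_eq_zero]
    constructor
    · rintro ⟨rfl, _⟩; rfl
    · rintro rfl
      exact ⟨rfl, ⟨by simp, by simp⟩⟩
  rw [SimpleGraph.numMatchings, this, Set.ncard_singleton]

lemma numMatchings_ge_three {j : ℕ} (hj : 3 ≤ j) : (KGraph k t ℓ).numMatchings j = 0 := by
  have : {s : Finset (Sym2 (KV k t)) | s.card = j ∧ (KGraph k t ℓ).IsMatchingFinset s}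
      = ∅ := by
    ext s
    simp only [Set.mem_setOf_eq, Set.mem_empty_iff_false, iff_false, not_and]
    rintro rfl hs
    exact absurd (matching_card_le hs) (by omega)
  rw [SimpleGraph.numMatchings, this, Set.ncard_empty]

end KAux

namespace KAux
variable {k t ℓ : ℕ}

def E1 (k t : ℕ) : Finset (Sym2 (KV k t)) :=
  Finset.univ.image (fun j : Fin k => s(cV, leafV j))

def E2 (k t ℓ : ℕ) : Finset (Sym2 (KV k t)) :=
  (Finset.univ.filter (fun j : Fin k => (j : ℕ) < ℓ)).image (fun j => s(uV, leafV j))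

def E3 (k t : ℕ) : Finset (Sym2 (KV k t)) :=
  Finset.univ.image (fun i : Fin t => s(uV, wV i))

lemma mem_E1 {e : Sym2 (KV k t)} : e ∈ E1 k t ↔ ∃ j : Fin k, e = s(cV, leafV j) := by
  simp [E1, eq_comm]

lemma mem_E2 {e : Sym2 (KV k t)} :
    e ∈ E2 k t ℓ ↔ ∃ j : Fin k, (j : ℕ) < ℓ ∧ e = s(uV, leafV j) := by
  simp [E2, eq_comm]

lemma mem_E3 {e : Sym2 (KV k t)} : e ∈ E3 k t ↔ ∃ i : Fin t, e = s(uV, wV i) := by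
  simp [E3, eq_comm]

lemma edgeSet_eq : (KGraph k t ℓ).edgeSet = ↑(E1 k t ∪ E2 k t ℓ ∪ E3 k t) := by
  ext e
  rw [Finset.coe_union, Finset.coe_union, Set.mem_union, Set.mem_union, edge_iff]
  simp only [Finset.mem_coe, mem_E1, mem_E2, mem_E3]
  constructor
  · rintro (h | h | h)
    · exact Or.inl (Or.inl h)
    · exact Or.inl (Or.inr h)
    · exact Or.inr h
  · rintro ((h | h) | h)
    · exact Or.inl h
    · exact Or.inr (Or.inl h)
    · exact Or.inr (Or.inr h)

lemma card_E1 : (E1 k t).card = k := by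
  rw [E1, Finset.card_image_of_injective _ (fun a b hab => ?_), Finset.card_univ, Fintype.card_fin]
  simpa [Sym2.eq_iff, cV, leafV, uV, wV] using hab

lemma card_lt_filter (hℓk : ℓ ≤ k) :
    (Finset.univ.filter fun j : Fin k => (j : ℕ) < ℓ).card = ℓ := by
  have he : (Finset.univ.filter fun j : Fin k => (j : ℕ) < ℓ)
      = (Finset.univ : Finset (Fin ℓ)).map (Fin.castLEEmb hℓk) := by
    ext j
    simp only [Finset.mem_filter, Finset.mem_univ, true_and, Finset.mem_map,
      Fin.castLEEmb_apply]
    constructor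
    · intro h; exact ⟨⟨j, h⟩, rfl⟩
    · rintro ⟨a, rfl⟩; exact a.2
  rw [he, Finset.card_map, Finset.card_univ, Fintype.card_fin]

lemma card_E2 (hℓk : ℓ ≤ k) : (E2 k t ℓ).card = ℓ := by
  rw [E2, Finset.card_image_of_injective _ (fun a b hab => ?_)]
  · exact card_lt_filter hℓk
  · simpa [Sym2.eq_iff, cV, leafV, uV, wV] using hab

lemma card_E3 : (E3 k t).card = t := by
  rw [E3, Finset.card_image_of_injective _ (fun a b hab => ?_), Finset.card_univ, Fintype.card_fin]
  simpa [Sym2.eq_iff, cV, leafV, uV, wV] using hab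

end KAux

namespace KAux
variable {k t ℓ : ℕ}

lemma disj12 : Disjoint (E1 k t) (E2 k t ℓ) := by
  rw [Finset.disjoint_left]
  intro e h1 h2
  obtain ⟨j, rfl⟩ := mem_E1.1 h1
  obtain ⟨j', _, he⟩ := mem_E2.1 h2
  simp [Sym2.eq_iff, cV, uV, leafV] at he

lemma disj13 : Disjoint (E1 k t) (E3 k t) := by
  rw [Finset.disjoint_left]
  intro e h1 h2
  obtain ⟨j, rfl⟩ := mem_E1.1 h1
  obtain ⟨i, he⟩ := mem_E3.1 h2
  simp [Sym2.eq_iff, cV, uV, leafV, wV] at he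

lemma disj23 : Disjoint (E2 k t ℓ) (E3 k t) := by
  rw [Finset.disjoint_left]
  intro e h1 h2
  obtain ⟨j, _, rfl⟩ := mem_E2.1 h1
  obtain ⟨i, he⟩ := mem_E3.1 h2
  simp [Sym2.eq_iff, cV, uV, leafV, wV] at he

lemma numMatchings_one (hℓk : ℓ ≤ k) : (KGraph k t ℓ).numMatchings 1 = k + ℓ + t := by
  have hset : {s : Finset (Sym2 (KV k t)) | s.card = 1 ∧ (KGraph k t ℓ).IsMatchingFinset s}
      = ↑((E1 k t ∪ E2 k t ℓ ∪ E3 k t).image (fun e => ({e} : Finset (Sym2 (KV k t))))) := by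
    ext s
    simp only [Set.mem_setOf_eq, Finset.coe_image, Set.mem_image, Finset.mem_coe,
      Finset.card_eq_one]
    constructor
    · rintro ⟨⟨e, rfl⟩, hm, _⟩
      refine ⟨e, ?_, rfl⟩
      have := hm (show e ∈ (↑({e} : Finset (Sym2 (KV k t))) : Set _) by simp)
      rw [edgeSet_eq] at this
      simpa using this
    · rintro ⟨e, he, rfl⟩
      refine ⟨⟨e, rfl⟩, ?_, ?_⟩
      · rw [edgeSet_eq]
        intro x hx
        simp only [Finset.coe_singleton, Set.mem_singleton_iff] at hx
        subst hx
        simpa using he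
      · simp [Set.pairwise_singleton]
  rw [SimpleGraph.numMatchings, hset, Set.ncard_coe_finset,
    Finset.card_image_of_injective _ Finset.singleton_injective,
    Finset.card_union_of_disjoint (Finset.disjoint_union_left.2 ⟨disj13, disj23⟩),
    Finset.card_union_of_disjoint disj12, card_E1, card_E2 hℓk, card_E3]

end KAux

namespace KAux
variable {k t ℓ : ℕ}

lemma cV_not_mem_UE {e : Sym2 (KV k t)} (he : e ∈ E2 k t ℓ ∪ E3 k t) : cV ∉ e := by
  rcases Finset.mem_union.1 he with h | h
  · obtain ⟨j, _, rfl⟩ := mem_E2.1 h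
    simp [Sym2.mem_iff, cV, uV, leafV]
  · obtain ⟨i, rfl⟩ := mem_E3.1 h
    simp [Sym2.mem_iff, cV, uV, wV]

lemma UE_sub_edge {e : Sym2 (KV k t)} (he : e ∈ E2 k t ℓ ∪ E3 k t) :
    e ∈ (KGraph k t ℓ).edgeSet := by
  rw [edgeSet_eq]
  simp only [Finset.coe_union, Set.mem_union, Finset.mem_coe, Finset.mem_union] at he ⊢
  tauto

lemma cEdge_mem {j : Fin k} : s(cV, leafV j) ∈ (KGraph k t ℓ).edgeSet :=
  (edge_iff _).2 (Or.inl ⟨j, rfl⟩)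

lemma cEdge_inj {j j' : Fin k} (h : s(cV, leafV j) = s(cV, (leafV j' : KV k t))) : j = j' := by
  simpa [Sym2.eq_iff, cV, leafV] using h

/-- An edge containing `cV` is a `c`-edge, and its partner in a matching is a `u`-edge. -/
lemma pair_structure {a b : Sym2 (KV k t)} (ha : a ∈ (KGraph k t ℓ).edgeSet)
    (hb : b ∈ (KGraph k t ℓ).edgeSet) (hab : ∀ v ∈ a, v ∉ b) (hca : cV ∈ a) :
    ∃ j : Fin k, a = s(cV, leafV j) ∧ b ∈ E2 k t ℓ ∪ E3 k t ∧ leafV j ∉ b := by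
  obtain ⟨j, rfl⟩ | ⟨j, hj, rfl⟩ | ⟨i, rfl⟩ := (edge_iff a).1 ha
  rotate_left
  · exact absurd hca (by simp [Sym2.mem_iff, cV, uV, leafV])
  · exact absurd hca (by simp [Sym2.mem_iff, cV, uV, wV])
  refine ⟨j, rfl, ?_, hab (leafV j) (Sym2.mem_mk_right _ _)⟩
  have hcb : cV ∉ b := hab cV hca
  obtain ⟨j', rfl⟩ | ⟨j', hj', rfl⟩ | ⟨i, rfl⟩ := (edge_iff b).1 hb
  · exact absurd (Sym2.mem_mk_left _ _) hcb
  · exact Finset.mem_union_left _ (mem_E2.2 ⟨j', hj', rfl⟩)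
  · exact Finset.mem_union_right _ (mem_E3.2 ⟨i, rfl⟩)

end KAux

namespace KAux
variable {k t ℓ : ℕ}

def P2 (k t ℓ : ℕ) : Finset (Finset (Sym2 (KV k t))) :=
  (((Finset.univ : Finset (Fin k)) ×ˢ (E2 k t ℓ ∪ E3 k t)).filter
      (fun p => leafV p.1 ∉ p.2)).image
    (fun p => {s(cV, leafV p.1), p.2})

lemma matchings_two_eq :
    {s : Finset (Sym2 (KV k t)) | s.card = 2 ∧ (KGraph k t ℓ).IsMatchingFinset s}
      = ↑(P2 k t ℓ) := by
  ext s
  simp only [Set.mem_setOf_eq, Finset.mem_coe, P2, Finset.mem_image, Finset.mem_filter,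
    Finset.mem_product, Finset.mem_univ, true_and]
  constructor
  · rintro ⟨hcard, hsub, hpw⟩
    obtain ⟨a, b, hne, rfl⟩ := Finset.card_eq_two.1 hcard
    have ha : a ∈ (KGraph k t ℓ).edgeSet := hsub (by simp)
    have hb : b ∈ (KGraph k t ℓ).edgeSet := hsub (by simp)
    have hpair : ∀ v ∈ a, v ∉ b := hpw (by simp) (by simp) hne
    have hpair' : ∀ v ∈ b, v ∉ a := hpw (by simp) (by simp) hne.symm
    rcases c_or_u_mem ha with hca | hua
    · obtain ⟨j, rfl, hbU, hnb⟩ := pair_structure ha hb hpair hca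
      exact ⟨(j, b), ⟨hbU, hnb⟩, rfl⟩
    · have hcb : cV ∈ b := by
        rcases c_or_u_mem hb with h | h
        · exact h
        · exact absurd h (hpair uV hua)
      obtain ⟨j, rfl, haU, hna⟩ := pair_structure hb ha hpair' hcb
      exact ⟨(j, a), ⟨haU, hna⟩, by rw [Finset.pair_comm]⟩
  · rintro ⟨⟨j, b⟩, ⟨hbU, hnb⟩, rfl⟩
    have hcb : cV ∉ b := cV_not_mem_UE hbU
    have hne : s(cV, (leafV j : KV k t)) ≠ b := fun h => hcb (h ▸ Sym2.mem_mk_left _ _)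
    refine ⟨Finset.card_pair hne, ?_, ?_⟩
    · intro e he'
      simp only [Finset.coe_insert, Set.mem_insert_iff, Finset.coe_singleton,
        Set.mem_singleton_iff] at he'
      rcases he' with rfl | rfl
      · exact cEdge_mem
      · exact UE_sub_edge hbU
    · have key : ∀ v ∈ s(cV, (leafV j : KV k t)), v ∉ b := by
        intro v hv
        rcases Sym2.mem_iff.1 hv with rfl | rfl
        · exact hcb
        · exact hnb
      rw [Finset.coe_insert, Finset.coe_singleton]
      intro x hx y hy hxy
      simp only [Set.mem_insert_iff, Set.mem_singleton_iff] at hx hy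
      rcases hx with rfl | rfl <;> rcases hy with rfl | rfl
      · exact absurd rfl hxy
      · exact key
      · exact fun v hv hv' => key v hv' hv
      · exact absurd rfl hxy

lemma card_P2 (hℓk : ℓ ≤ k) : (P2 k t ℓ).card = k * (ℓ + t) - ℓ := by
  rw [P2, Finset.card_image_of_injOn ?inj]
  case inj =>
    rintro ⟨j, b⟩ hp ⟨j', b'⟩ hq heq
    simp only [Finset.mem_coe, Finset.mem_filter, Finset.mem_product] at hp hq
    have hcb : cV ∉ b := cV_not_mem_UE hp.1.2
    have hcb' : cV ∉ b' := cV_not_mem_UE hq.1.2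
    dsimp only at heq
    have h1 : s(cV, (leafV j : KV k t)) ∈ ({s(cV, leafV j'), b'} : Finset _) := by
      rw [← heq]; exact Finset.mem_insert_self _ _
    rcases Finset.mem_insert.1 h1 with h | h
    · have hj : j = j' := cEdge_inj h
      subst hj
      have h2 : b ∈ ({s(cV, (leafV j : KV k t)), b'} : Finset _) := by
        rw [← heq]; exact Finset.mem_insert_of_mem (Finset.mem_singleton_self _)
      rcases Finset.mem_insert.1 h2 with h' | h'
      · exact absurd (h' ▸ Sym2.mem_mk_left _ _ : cV ∈ b) hcb
      · rw [Finset.mem_singleton] at h'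
        rw [h']
    · rw [Finset.mem_singleton] at h
      exact absurd (h ▸ Sym2.mem_mk_left _ _ : cV ∈ b') hcb'
  have htotal : ((Finset.univ : Finset (Fin k)) ×ˢ (E2 k t ℓ ∪ E3 k t)).card = k * (ℓ + t) := by
    rw [Finset.card_product, Finset.card_univ, Fintype.card_fin,
      Finset.card_union_of_disjoint disj23, card_E2 hℓk, card_E3]
  have hbad : (((Finset.univ : Finset (Fin k)) ×ˢ (E2 k t ℓ ∪ E3 k t)).filter
      (fun p => leafV p.1 ∈ p.2)).card = ℓ := by
    have he : ((Finset.univ : Finset (Fin k)) ×ˢ (E2 k t ℓ ∪ E3 k t)).filter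
        (fun p => leafV p.1 ∈ p.2)
        = (Finset.univ.filter (fun j : Fin k => (j : ℕ) < ℓ)).image
            (fun j => (j, s(uV, leafV j))) := by
      ext ⟨j, b⟩
      simp only [Finset.mem_filter, Finset.mem_product, Finset.mem_univ, true_and,
        Finset.mem_image, Finset.mem_union]
      constructor
      · rintro ⟨hbU, hmem⟩
        rcases hbU with h2 | h3
        · obtain ⟨j', hj', rfl⟩ := mem_E2.1 h2
          have hjj : j = j' := by
            rcases Sym2.mem_iff.1 hmem with h | h
            · exact absurd h (by simp [uV, leafV])
            · simpa [leafV] using h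
          subst hjj
          exact ⟨j, hj', rfl⟩
        · obtain ⟨i, rfl⟩ := mem_E3.1 h3
          rcases Sym2.mem_iff.1 hmem with h | h
          · exact absurd h (by simp [uV, leafV])
          · exact absurd h (by simp [wV, leafV])
      · rintro ⟨j', hj', heq⟩
        rw [Prod.ext_iff] at heq
        obtain ⟨rfl, rfl⟩ := heq
        exact ⟨Or.inl (mem_E2.2 ⟨j', hj', rfl⟩), Sym2.mem_mk_right _ _⟩
    rw [he, Finset.card_image_of_injective _ (fun a b hab => by
        simpa using (Prod.ext_iff.1 hab).1), card_lt_filter hℓk]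
  have hsum := Finset.card_filter_add_card_filter_not
    (s := (Finset.univ : Finset (Fin k)) ×ˢ (E2 k t ℓ ∪ E3 k t))
    (p := fun p => leafV p.1 ∈ p.2)
  omega

lemma numMatchings_two (hℓk : ℓ ≤ k) :
    (KGraph k t ℓ).numMatchings 2 = k * (ℓ + t) - ℓ := by
  rw [SimpleGraph.numMatchings, matchings_two_eq, Set.ncard_coe_finset, card_P2 hℓk]

end KAux

open KAux in
/-- The matching polynomial of `K(k,t;ℓ)` is `x^(k+t-2) (x⁴ - (k+t+ℓ)x² + (ℓ+t)(k-1) + t)`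
(stated with both sides multiplied by `x`, so that the exponent `k+t-2` need not be a natural
number). -/
theorem matchingPolynomial_KGraph (k t ℓ : ℕ) (hk : 1 ≤ k) (hℓ : 1 ≤ ℓ) (hℓk : ℓ ≤ k) :
    X * (KGraph k t ℓ).matchingPolynomial =
      X ^ (k + t - 1) *
        (X ^ 4 - C ((k : ℝ) + (t : ℝ) + (ℓ : ℝ)) * X ^ 2 +
          C (((ℓ : ℝ) + (t : ℝ)) * ((k : ℝ) - 1) + (t : ℝ))) := by
  have hcard : Fintype.card (Option (Option (Fin k) ⊕ Fin t)) = k + t + 2 := by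
    simp only [Fintype.card_option, Fintype.card_sum, Fintype.card_fin]
    omega
  have hμ : (KGraph k t ℓ).matchingPolynomial
      = ∑ j ∈ Finset.range 3,
          C ((-1 : ℝ) ^ j * ((KGraph k t ℓ).numMatchings j : ℝ)) * X ^ (k + t + 2 - 2 * j) := by
    rw [SimpleGraph.matchingPolynomial]
    simp_rw [hcard]
    refine (Finset.sum_subset (Finset.range_subset_range.2 (by omega)) ?_).symm
    intro x hx hx3
    rw [numMatchings_ge_three (by simp at hx3; omega)]
    simp
  rw [hμ, Finset.sum_range_succ, Finset.sum_range_succ, Finset.sum_range_one,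
    numMatchings_zero, numMatchings_one hℓk, numMatchings_two hℓk]
  have hle : ℓ ≤ k * (ℓ + t) := le_trans (Nat.le_mul_of_pos_left ℓ hk)
    (Nat.mul_le_mul_left k (Nat.le_add_right ℓ t))
  rcases Nat.lt_or_ge (k + t) 2 with h2 | h2
  · -- k + t = 1, so k = 1, t = 0, ℓ = 1
    obtain ⟨rfl, rfl, rfl⟩ : k = 1 ∧ t = 0 ∧ ℓ = 1 := by omega
    norm_num
    ring
  · obtain ⟨n, hn⟩ : ∃ n, k + t = n + 2 := ⟨k + t - 2, by omega⟩
    rw [show k + t + 2 - 2 * 0 = n + 4 by omega, show k + t + 2 - 2 * 1 = n + 2 by omega,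
      show k + t + 2 - 2 * 2 = n by omega, show k + t - 1 = n + 1 by omega]
    push_cast [Nat.cast_sub hle]
    norm_num [map_add, map_sub, map_mul, map_one, map_neg, map_natCast, C_1]
    ring
end

section
/- For all integers t ≥ 0 and ℓ ∈ {1,2,3}, the matching polynomial of the graph L(t,ℓ) is μ(L(t,ℓ),x) = x^t (x⁴ − (t+ℓ+3)x² + 3t + ℓ). -/
open Polynomial

/-- The graph `L(t,ℓ)`: a triangle `K₃` on the vertices `some (Sum.inl _)`, `t` further vertices
`some (Sum.inr i)`, and an extra vertex `none` adjacent to exactly the first `ℓ` vertices of the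
triangle and to all `t` further vertices. -/
def LGraph (t ℓ : ℕ) : SimpleGraph (Option (Fin 3 ⊕ Fin t)) :=
  SimpleGraph.fromRel fun x y =>
    (∃ a b : Fin 3, a ≠ b ∧ x = some (Sum.inl a) ∧ y = some (Sum.inl b)) ∨
    (∃ a : Fin 3, (a : ℕ) < ℓ ∧ x = none ∧ y = some (Sum.inl a)) ∨
    (∃ i : Fin t, x = none ∧ y = some (Sum.inr i))

namespace LGraphAux

open Sum SimpleGraph

/-- Vertex type of `LGraph t ℓ`. -/
abbrev W (t : ℕ) : Type := Option (Fin 3 ⊕ Fin t)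

/-- Triangle edge `{a, a+1}`. -/
def triE (t : ℕ) (a : Fin 3) : Sym2 (W t) := s(some (inl a), some (inl (a + 1)))

/-- Edge from the hub `none` to `some w`. -/
def uE (t : ℕ) (w : Fin 3 ⊕ Fin t) : Sym2 (W t) := s((none : W t), some w)

lemma fin3_succ_ne (a : Fin 3) : a ≠ a + 1 := by revert a; decide

lemma fin3_cases : ∀ a b : Fin 3, a ≠ b → b = a + 1 ∨ a = b + 1 := by decide

lemma fin3_eq_of : ∀ a b : Fin 3, a = b ∨ (a = b + 1 ∧ a + 1 = b) → a = b := by decide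

lemma fin3_opp : ∀ a a' : Fin 3, a' ≠ a → a' ≠ a + 1 → a = a' + 1 := by decide

lemma fin3_share : ∀ a b : Fin 3,
    a = b ∨ a = b + 1 ∨ a + 1 = b ∨ a + 1 = b + 1 := by decide

variable {t ℓ : ℕ}

lemma none_not_mem_triE (a : Fin 3) : (none : W t) ∉ triE t a := by
  simp [triE]

lemma none_mem_uE (w : Fin 3 ⊕ Fin t) : (none : W t) ∈ uE t w := by
  simp [uE]

lemma triE_ne_uE (a : Fin 3) (w : Fin 3 ⊕ Fin t) : triE t a ≠ uE t w := by
  intro h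
  exact none_not_mem_triE a (h ▸ none_mem_uE w)

lemma triE_inj {a b : Fin 3} (h : triE t a = triE t b) : a = b := by
  apply fin3_eq_of
  simpa [triE, Sym2.eq_iff] using h

lemma uE_inj {w w' : Fin 3 ⊕ Fin t} (h : uE t w = uE t w') : w = w' := by
  simpa [uE, Sym2.eq_iff] using h

lemma triE_share (a b : Fin 3) : ∃ v, v ∈ triE t a ∧ v ∈ triE t b := by
  rcases fin3_share a b with h | h | h | h
  · exact ⟨some (inl a), by simp [triE], by simp [triE, h]⟩
  · exact ⟨some (inl a), by simp [triE], by simp [triE, h]⟩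
  · exact ⟨some (inl (a + 1)), by simp [triE], by simp [triE, h]⟩
  · exact ⟨some (inl (a + 1)), by simp [triE], by simp [triE, h]⟩

lemma triE_mem (a : Fin 3) : triE t a ∈ (LGraph t ℓ).edgeSet := by
  rw [triE, SimpleGraph.mem_edgeSet, LGraph, SimpleGraph.fromRel_adj]
  exact ⟨by simp [(fin3_succ_ne a)], Or.inl (Or.inl ⟨a, a + 1, fin3_succ_ne a, rfl, rfl⟩)⟩

lemma uEl_mem {a : Fin 3} (ha : (a : ℕ) < ℓ) : uE t (inl a) ∈ (LGraph t ℓ).edgeSet := by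
  rw [uE, SimpleGraph.mem_edgeSet, LGraph, SimpleGraph.fromRel_adj]
  exact ⟨by simp, Or.inl (Or.inr (Or.inl ⟨a, ha, rfl, rfl⟩))⟩

lemma uEr_mem (i : Fin t) : uE t (inr i) ∈ (LGraph t ℓ).edgeSet := by
  rw [uE, SimpleGraph.mem_edgeSet, LGraph, SimpleGraph.fromRel_adj]
  exact ⟨by simp, Or.inl (Or.inr (Or.inr ⟨i, rfl, rfl⟩))⟩

lemma edge_cases {e : Sym2 (W t)} (he : e ∈ (LGraph t ℓ).edgeSet) :
    (∃ a : Fin 3, e = triE t a) ∨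
    (∃ a : Fin 3, (a : ℕ) < ℓ ∧ e = uE t (inl a)) ∨
    (∃ i : Fin t, e = uE t (inr i)) := by
  induction e with
  | _ x y =>
    rw [SimpleGraph.mem_edgeSet, LGraph, SimpleGraph.fromRel_adj] at he
    obtain ⟨hne, h | h⟩ := he <;>
      rcases h with ⟨a, b, hab, hx, hy⟩ | ⟨a, ha, hx, hy⟩ | ⟨i, hx, hy⟩ <;>
        subst hx <;> subst hy
    · rcases fin3_cases a b hab with h | h
      · exact Or.inl ⟨a, by rw [h]; rfl⟩
      · exact Or.inl ⟨b, by rw [triE, ← h]; exact Sym2.eq_swap⟩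
    · exact Or.inr (Or.inl ⟨a, ha, rfl⟩)
    · exact Or.inr (Or.inr ⟨i, rfl⟩)
    · rcases fin3_cases a b hab with h | h
      · exact Or.inl ⟨a, by rw [h, triE]; exact Sym2.eq_swap⟩
      · exact Or.inl ⟨b, by rw [h]; rfl⟩
    · exact Or.inr (Or.inl ⟨a, ha, Sym2.eq_swap⟩)
    · exact Or.inr (Or.inr ⟨i, Sym2.eq_swap⟩)

lemma matching_card_le {s : Finset (Sym2 (W t))}
    (hs : (LGraph t ℓ).IsMatchingFinset s) : s.card ≤ 2 := by
  classical
  have h2 : (Finset.univ : Finset Bool).card = 2 := by simp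
  rw [← h2]
  apply Finset.card_le_card_of_injOn (fun e => decide ((none : W t) ∈ e))
    (fun _ _ => Finset.mem_univ _)
  intro e he f hf hef
  by_contra hne
  have hd : ∀ v ∈ e, v ∉ f := hs.2 (Finset.mem_coe.2 he) (Finset.mem_coe.2 hf) hne
  have hee := hs.1 (Finset.mem_coe.2 he)
  have hff := hs.1 (Finset.mem_coe.2 hf)
  have hiff : (none : W t) ∈ e ↔ (none : W t) ∈ f := by
    constructor <;> intro h <;> simp_all
  rcases edge_cases hee with ⟨a, rfl⟩ | ⟨a, ha, rfl⟩ | ⟨i, rfl⟩ <;>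
    rcases edge_cases hff with ⟨b, rfl⟩ | ⟨b, hb, rfl⟩ | ⟨j, rfl⟩
  · obtain ⟨v, hv1, hv2⟩ := triE_share a b (t := t)
    exact hd v hv1 hv2
  · exact (hiff.2 (none_mem_uE _)) |> none_not_mem_triE a
  · exact (hiff.2 (none_mem_uE _)) |> none_not_mem_triE a
  · exact (hiff.1 (none_mem_uE _)) |> none_not_mem_triE b
  · exact hd none (none_mem_uE _) (none_mem_uE _)
  · exact hd none (none_mem_uE _) (none_mem_uE _)
  · exact (hiff.1 (none_mem_uE _)) |> none_not_mem_triE b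
  · exact hd none (none_mem_uE _) (none_mem_uE _)
  · exact hd none (none_mem_uE _) (none_mem_uE _)


/-- index type for edges -/
def eMap (t : ℕ) {ℓ : ℕ} (h3 : ℓ ≤ 3) : Fin 3 ⊕ Fin ℓ ⊕ Fin t → Sym2 (W t)
  | .inl a => triE t a
  | .inr (.inl b) => uE t (inl (Fin.castLE h3 b))
  | .inr (.inr i) => uE t (inr i)

lemma eMap_inj (h3 : ℓ ≤ 3) : Function.Injective (eMap t h3) := by
  rintro (a | b | i) (a' | b' | i') h <;> simp only [eMap] at h
  · rw [triE_inj h]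
  · exact absurd h (triE_ne_uE _ _)
  · exact absurd h (triE_ne_uE _ _)
  · exact absurd h.symm (triE_ne_uE _ _)
  · have := uE_inj h
    simp only [inl.injEq] at this
    rw [Fin.castLE_injective h3 this]
  · simpa using uE_inj h
  · exact absurd h.symm (triE_ne_uE _ _)
  · simpa using uE_inj h
  · have := uE_inj h
    simp only [inr.injEq] at this
    rw [this]

lemma edgeSet_eq (h3 : ℓ ≤ 3) :
    (LGraph t ℓ).edgeSet = Set.range (eMap t h3) := by
  ext e
  constructor
  · intro he
    rcases edge_cases he with ⟨a, rfl⟩ | ⟨a, ha, rfl⟩ | ⟨i, rfl⟩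
    · exact ⟨.inl a, rfl⟩
    · refine ⟨.inr (.inl ⟨(a : ℕ), ha⟩), ?_⟩
      simp only [eMap]
      congr 1
    · exact ⟨.inr (.inr i), rfl⟩
  · rintro ⟨(a | b | i), rfl⟩
    · exact triE_mem a
    · exact uEl_mem (by simpa using b.isLt)
    · exact uEr_mem i

lemma edgeSet_ncard (h3 : ℓ ≤ 3) : (LGraph t ℓ).edgeSet.ncard = t + ℓ + 3 := by
  rw [edgeSet_eq h3]
  have : Set.range (eMap t h3) = ↑(Finset.univ.image (eMap t h3)) := by
    ext e; simp
  rw [this, Set.ncard_coe_finset, Finset.card_image_of_injective _ (eMap_inj h3),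
    Finset.card_univ]
  simp only [Fintype.card_sum, Fintype.card_fin]
  omega

lemma num0 : (LGraph t ℓ).numMatchings 0 = 1 := by
  have h : {s : Finset (Sym2 (W t)) | s.card = 0 ∧ (LGraph t ℓ).IsMatchingFinset s}
      = {∅} := by
    ext s
    simp only [Set.mem_setOf_eq, Set.mem_singleton_iff, Finset.card_eq_zero]
    constructor
    · exact fun h => h.1
    · rintro rfl
      exact ⟨rfl, by simp [SimpleGraph.IsMatchingFinset]⟩
  rw [SimpleGraph.numMatchings, h, Set.ncard_singleton]

lemma num1 (h3 : ℓ ≤ 3) : (LGraph t ℓ).numMatchings 1 = t + ℓ + 3 := by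
  have h : {s : Finset (Sym2 (W t)) | s.card = 1 ∧ (LGraph t ℓ).IsMatchingFinset s}
      = (fun e => ({e} : Finset (Sym2 (W t)))) '' (LGraph t ℓ).edgeSet := by
    ext s
    simp only [Set.mem_setOf_eq, Set.mem_image]
    constructor
    · rintro ⟨hc, hm⟩
      obtain ⟨e, rfl⟩ := Finset.card_eq_one.1 hc
      exact ⟨e, hm.1 (by simp), rfl⟩
    · rintro ⟨e, he, rfl⟩
      refine ⟨Finset.card_singleton e, ?_, ?_⟩
      · simpa using he
      · simp [Set.pairwise_singleton]
  rw [SimpleGraph.numMatchings, h,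
    Set.ncard_image_of_injective _ Finset.singleton_injective, edgeSet_ncard h3]

/-- index map for 2-matchings -/
def pMap (t : ℕ) {ℓ : ℕ} (h3 : ℓ ≤ 3) : Fin ℓ ⊕ Fin 3 × Fin t → Finset (Sym2 (W t))
  | .inl b => {triE t (Fin.castLE h3 b + 1), uE t (inl (Fin.castLE h3 b))}
  | .inr (a, i) => {triE t a, uE t (inr i)}

lemma pMap_inj (h3 : ℓ ≤ 3) : Function.Injective (pMap t h3) := by
  have key : ∀ (a a' : Fin 3) (w w' : Fin 3 ⊕ Fin t),
      ({triE t a, uE t w} : Finset (Sym2 (W t))) = {triE t a', uE t w'} →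
      a = a' ∧ w = w' := by
    intro a a' w w' h
    have h1 : triE t a ∈ ({triE t a', uE t w'} : Finset (Sym2 (W t))) := by
      rw [← h]; simp
    have h2 : uE t w ∈ ({triE t a', uE t w'} : Finset (Sym2 (W t))) := by
      rw [← h]; simp
    simp only [Finset.mem_insert, Finset.mem_singleton] at h1 h2
    rcases h1 with h1 | h1
    · rcases h2 with h2 | h2
      · exact absurd h2.symm (triE_ne_uE _ _)
      · exact ⟨triE_inj h1, uE_inj h2⟩
    · exact absurd h1 (triE_ne_uE _ _)
  rintro (b | ⟨a, i⟩) (b' | ⟨a', i'⟩) h <;> simp only [pMap] at h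
  · obtain ⟨-, h2⟩ := key _ _ _ _ h
    simp only [inl.injEq] at h2
    rw [Fin.castLE_injective h3 h2]
  · obtain ⟨-, h2⟩ := key _ _ _ _ h
    simp at h2
  · obtain ⟨-, h2⟩ := key _ _ _ _ h
    simp at h2
  · obtain ⟨h1, h2⟩ := key _ _ _ _ h
    simp only [inr.injEq] at h2
    rw [h1, h2]

lemma pMap_card (h3 : ℓ ≤ 3) (j : Fin ℓ ⊕ Fin 3 × Fin t) : (pMap t h3 j).card = 2 := by
  rcases j with b | ⟨a, i⟩ <;>
    simp [pMap, Finset.card_insert_of_notMem, triE_ne_uE]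

lemma pMap_matching (h3 : ℓ ≤ 3) (j : Fin ℓ ⊕ Fin 3 × Fin t) :
    (LGraph t ℓ).IsMatchingFinset (pMap t h3 j) := by
  have pair : ∀ (a : Fin 3) (w : Fin 3 ⊕ Fin t),
      (∀ v ∈ triE t a, v ∉ uE t w) →
      (({triE t a, uE t w} : Finset (Sym2 (W t))) : Set (Sym2 (W t))).Pairwise
        fun e f => ∀ v ∈ e, v ∉ f := by
    intro a w hdis
    intro x hx y hy hne
    simp only [Finset.coe_insert, Finset.coe_singleton, Set.mem_insert_iff,
      Set.mem_singleton_iff] at hx hy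
    rcases hx with rfl | rfl <;> rcases hy with rfl | rfl
    · exact absurd rfl hne
    · exact hdis
    · exact fun v hv hv2 => hdis v hv2 hv
    · exact absurd rfl hne
  rcases j with b | ⟨a, i⟩
  · constructor
    · intro e he
      simp only [pMap, Finset.coe_insert, Finset.coe_singleton, Set.mem_insert_iff,
        Set.mem_singleton_iff] at he
      rcases he with rfl | rfl
      · exact triE_mem _
      · exact uEl_mem (by simpa using b.isLt)
    · apply pair
      intro v hv hv2
      simp only [triE, Sym2.mem_iff] at hv
      simp only [uE, Sym2.mem_iff] at hv2
      rcases hv with rfl | rfl <;> rcases hv2 with h | h <;> simp_all <;>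
        revert h <;>
        exact fun h => absurd h (by
          have : ∀ c : Fin 3, ¬(c + 1 = c) ∧ ¬(c + 1 + 1 = c) := by decide
          first
            | exact (this _).1
            | exact (this _).2)
  · constructor
    · intro e he
      simp only [pMap, Finset.coe_insert, Finset.coe_singleton, Set.mem_insert_iff,
        Set.mem_singleton_iff] at he
      rcases he with rfl | rfl
      · exact triE_mem _
      · exact uEr_mem i
    · apply pair
      intro v hv hv2
      simp only [triE, Sym2.mem_iff] at hv
      simp only [uE, Sym2.mem_iff] at hv2
      rcases hv with rfl | rfl <;> simp_all

lemma matchSet2_eq (h3 : ℓ ≤ 3) :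
    {s : Finset (Sym2 (W t)) | s.card = 2 ∧ (LGraph t ℓ).IsMatchingFinset s}
      = Set.range (pMap t h3) := by
  ext s
  simp only [Set.mem_setOf_eq, Set.mem_range]
  constructor
  · rintro ⟨hc, hm⟩
    obtain ⟨e, f, hef, rfl⟩ := Finset.card_eq_two.1 hc
    have he : e ∈ (LGraph t ℓ).edgeSet := hm.1 (by simp)
    have hf : f ∈ (LGraph t ℓ).edgeSet := hm.1 (by simp)
    have hd : ∀ v ∈ e, v ∉ f := hm.2 (by simp) (by simp) hef
    rcases edge_cases he with ⟨a, rfl⟩ | ⟨a, ha, rfl⟩ | ⟨i, rfl⟩ <;>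
      rcases edge_cases hf with ⟨b, rfl⟩ | ⟨b, hb, rfl⟩ | ⟨j, rfl⟩
    · obtain ⟨v, hv1, hv2⟩ := triE_share a b (t := t)
      exact absurd (hd v hv1) (by simp [hv2])
    · -- triangle edge and hub edge to `b` with `b < ℓ`
      refine ⟨.inl ⟨(b : ℕ), hb⟩, ?_⟩
      have hba : b ≠ a := by
        intro h
        exact hd (some (inl a)) (by simp [triE]) (by simp [uE, ← h])
      have hba1 : b ≠ a + 1 := by
        intro h
        exact hd (some (inl (a + 1))) (by simp [triE]) (by simp [uE, ← h])
      have hab : a = b + 1 := fin3_opp a b hba hba1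
      have hcast : Fin.castLE h3 (⟨(b : ℕ), hb⟩ : Fin ℓ) = b := Fin.ext rfl
      simp only [pMap, hcast, ← hab]
    · exact ⟨.inr (a, j), rfl⟩
    · refine ⟨.inl ⟨(a : ℕ), ha⟩, ?_⟩
      have hab : a ≠ b := by
        intro h
        exact hd (some (inl a)) (by simp [uE]) (by simp [triE, h])
      have hab1 : a ≠ b + 1 := by
        intro h
        exact hd (some (inl a)) (by simp [uE]) (by simp [triE, h])
      have hba : b = a + 1 := fin3_opp b a hab hab1
      have hcast : Fin.castLE h3 (⟨(a : ℕ), ha⟩ : Fin ℓ) = a := Fin.ext rfl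
      rw [Finset.pair_comm]
      simp only [pMap, hcast, ← hba]
    · exact absurd (hd none (none_mem_uE _)) (by simp [none_mem_uE])
    · exact absurd (hd none (none_mem_uE _)) (by simp [none_mem_uE])
    · refine ⟨.inr (b, i), ?_⟩
      rw [Finset.pair_comm]
      rfl
    · exact absurd (hd none (none_mem_uE _)) (by simp [none_mem_uE])
    · exact absurd (hd none (none_mem_uE _)) (by simp [none_mem_uE])
  · rintro ⟨j, rfl⟩
    exact ⟨pMap_card h3 j, pMap_matching h3 j⟩

lemma num2 (h3 : ℓ ≤ 3) : (LGraph t ℓ).numMatchings 2 = 3 * t + ℓ := by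
  rw [SimpleGraph.numMatchings, matchSet2_eq h3]
  have : Set.range (pMap t h3) = ↑(Finset.univ.image (pMap t h3)) := by
    ext e; simp
  rw [this, Set.ncard_coe_finset, Finset.card_image_of_injective _ (pMap_inj h3),
    Finset.card_univ]
  simp only [Fintype.card_sum, Fintype.card_prod, Fintype.card_fin]
  omega

lemma num_ge3 {k : ℕ} (hk : 3 ≤ k) : (LGraph t ℓ).numMatchings k = 0 := by
  have h : {s : Finset (Sym2 (W t)) | s.card = k ∧ (LGraph t ℓ).IsMatchingFinset s}
      = ∅ := by
    ext s
    simp only [Set.mem_setOf_eq, Set.mem_empty_iff_false, iff_false, not_and]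
    intro hc hm
    have := matching_card_le hm
    omega
  rw [SimpleGraph.numMatchings, h, Set.ncard_empty]

end LGraphAux

/-- The matching polynomial of `L(t,ℓ)` is `x^t (x⁴ - (t+ℓ+3)x² + 3t + ℓ)`. -/
theorem matchingPolynomial_LGraph (t ℓ : ℕ) (hℓ : 1 ≤ ℓ) (hℓ3 : ℓ ≤ 3) :
    (LGraph t ℓ).matchingPolynomial =
      X ^ t * (X ^ 4 - C ((t : ℝ) + (ℓ : ℝ) + 3) * X ^ 2 + C (3 * (t : ℝ) + (ℓ : ℝ))) := by
  classical
  rw [SimpleGraph.matchingPolynomial]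
  have hcard : Fintype.card (Option (Fin 3 ⊕ Fin t)) = t + 4 := by
    simp only [Fintype.card_option, Fintype.card_sum, Fintype.card_fin]
    omega
  rw [hcard]
  have hsub : Finset.range 3 ⊆ Finset.range (t + 4 + 1) := by
    apply Finset.range_subset_range.2; omega
  rw [← Finset.sum_subset hsub (by
    intro k hk hk3
    simp only [Finset.mem_range] at hk hk3
    rw [LGraphAux.num_ge3 (by omega)]
    simp)]
  rw [Finset.sum_range_succ, Finset.sum_range_succ, Finset.sum_range_succ,
    Finset.sum_range_zero, LGraphAux.num0, LGraphAux.num1 hℓ3, LGraphAux.num2 hℓ3]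
  have e0 : t + 4 - 2 * 0 = t + 4 := by omega
  have e1 : t + 4 - 2 * 1 = t + 2 := by omega
  have e2 : t + 4 - 2 * 2 = t := by omega
  rw [e0, e1, e2]
  have c0 : ((-1 : ℝ)) ^ 0 * ((1 : ℕ) : ℝ) = 1 := by norm_num
  have c1 : ((-1 : ℝ)) ^ 1 * (((t + ℓ + 3 : ℕ)) : ℝ) = -((t : ℝ) + (ℓ : ℝ) + 3) := by
    push_cast; ring
  have c2 : ((-1 : ℝ)) ^ 2 * (((3 * t + ℓ : ℕ)) : ℝ) = 3 * (t : ℝ) + (ℓ : ℝ) := by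
    push_cast; ring
  rw [c0, c1, c2, map_neg, map_one]
  have p0 : (X : Polynomial ℝ) ^ (t + 4) = X ^ t * X ^ 4 := pow_add X t 4
  have p1 : (X : Polynomial ℝ) ^ (t + 2) = X ^ t * X ^ 2 := pow_add X t 2
  rw [p0, p1]
  ring
end
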